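/- arXiv:1709.06878 — 3 statements merged into one kernel-verified Lean document; each statement's English description precedes it below -/
import Mathlib

section
/- Let η_l < η_r and let F : ℝ → ℝ be of class C³ and bistable between η_l and η_r. Let (η, c) be a Weertman profile with velocity c for the potential F. Then lim_{x→+∞} x·(η(x) − η_r) = (η_l − η_r)/(π F''(η_r)) and lim_{x→−∞} x·(η(x) − η_l) = (η_l − η_r)/(π F''(η_l)). -/
open MeasureTheory Filter Set

/-- The half-Laplacian `|∂x|` acting on a bounded C² function. -/
noncomputable def halfLap (u : ℝ → ℝ) (x : ℝ) : ℝ :=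
  -(1 / Real.pi) * ∫ y in Set.Ioi (0 : ℝ), (u (x + y) - 2 * u x + u (x - y)) / y ^ 2

open MeasureTheory Filter Set intervalIntegral Topology
set_option linter.unusedSectionVars false
set_option linter.unusedVariables false
set_option maxHeartbeats 1000000

lemma integ_inv_sq {a b : ℝ} (h : (0:ℝ) ∉ uIcc a b) :
    ∫ t in a..b, (t^2)⁻¹ = a⁻¹ - b⁻¹ := by
  have hder : ∀ x ∈ uIcc a b, HasDerivAt (fun t : ℝ => -t⁻¹) ((x^2)⁻¹) x := by
    intro x hx
    have hx0 : x ≠ 0 := fun hh => h (hh ▸ hx)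
    exact (hasDerivAt_inv hx0).neg.congr_deriv (by ring)
  have hint : IntervalIntegrable (fun t : ℝ => (t^2)⁻¹) volume a b := by
    apply ContinuousOn.intervalIntegrable
    apply ContinuousOn.inv₀ (by fun_prop)
    intro x hx
    exact pow_ne_zero 2 (fun hh => h (hh ▸ hx))
  have := intervalIntegral.integral_eq_sub_of_hasDerivAt hder hint
  rw [this]; ring

section Basics
variable {ηl ηr B : ℝ} {η : ℝ → ℝ}
  (hη : ContDiff ℝ 2 η)
  (hη' : ∀ x, 0 < deriv η x)
  (hbot : Tendsto η atBot (nhds ηl)) (htop : Tendsto η atTop (nhds ηr))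
  (hB : ∀ x : ℝ, 1 ≤ |x| → deriv η x ≤ B / |x| ^ 2)

include hη

lemma eta_diff : ∀ x, DifferentiableAt ℝ η x := fun x =>
  (hη.differentiable (by norm_num)).differentiableAt

lemma eta_deriv_cont : Continuous (deriv η) := hη.continuous_deriv (by norm_num)

include hη'

lemma eta_mono : StrictMono η := strictMono_of_deriv_pos hη'

lemma eta_ftc : ∀ a b : ℝ, ∫ t in a..b, deriv η t = η b - η a := by
  intro a b
  exact intervalIntegral.integral_deriv_eq_sub (fun x _ => eta_diff hη x)
    ((eta_deriv_cont hη).continuousOn.intervalIntegrable)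

omit hη'
include htop

lemma eta_lt_top (hη' : ∀ x, 0 < deriv η x) : ∀ x, η x < ηr := by
  intro x
  have h1 : η x < η (x+1) := (eta_mono hη hη') (by linarith)
  have h2 : η (x+1) ≤ ηr := by
    refine ge_of_tendsto htop ?_
    filter_upwards [eventually_ge_atTop (x+1)] with b hb
    exact ((eta_mono hη hη').le_iff_le).2 hb
  linarith

omit htop
include hbot

lemma eta_gt_bot (hη' : ∀ x, 0 < deriv η x) : ∀ x, ηl < η x := by
  intro x
  have h1 : η (x-1) < η x := (eta_mono hη hη') (by linarith)
  have h2 : ηl ≤ η (x-1) := by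
    refine le_of_tendsto hbot ?_
    filter_upwards [eventually_le_atBot (x-1)] with b hb
    exact ((eta_mono hη hη').le_iff_le).2 hb
  linarith

omit hbot
include hη' hB

lemma eta_sub_le_core : ∀ a b : ℝ, a ≤ b → (0:ℝ) ∉ uIcc a b →
    (∀ x ∈ Icc a b, (1:ℝ) ≤ |x|) → η b - η a ≤ B * (a⁻¹ - b⁻¹) := by
  intro a b hab h0 habs
  rw [← eta_ftc hη hη' a b]
  have hmono : ∫ t in a..b, deriv η t ≤ ∫ t in a..b, B * (t^2)⁻¹ := by
    apply intervalIntegral.integral_mono_on hab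
      ((eta_deriv_cont hη).continuousOn.intervalIntegrable)
    · apply ContinuousOn.intervalIntegrable
      apply ContinuousOn.mul continuousOn_const
      apply ContinuousOn.inv₀ (by fun_prop)
      intro x hx
      exact pow_ne_zero 2 (fun hh => h0 (hh ▸ hx))
    · intro x hx
      have := hB x (habs x hx)
      rwa [div_eq_mul_inv, sq_abs] at this
  rw [intervalIntegral.integral_const_mul, integ_inv_sq h0] at hmono
  exact hmono

lemma eta_sub_le_pos : ∀ a b : ℝ, 1 ≤ a → a ≤ b → η b - η a ≤ B * (a⁻¹ - b⁻¹) := by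
  intro a b ha hab
  apply eta_sub_le_core hη hη' hB a b hab
  · rw [uIcc_of_le hab]; intro hc; exact absurd hc.1 (by norm_num; linarith)
  · intro x hx
    rw [abs_of_pos (by linarith [hx.1] : (0:ℝ) < x)]; linarith [hx.1]

lemma eta_sub_le_neg : ∀ a b : ℝ, a ≤ b → b ≤ -1 → η b - η a ≤ B * ((-b)⁻¹ - (-a)⁻¹) := by
  intro a b hab hb
  have := eta_sub_le_core hη hη' hB a b hab
    (by rw [uIcc_of_le hab]; intro hc; exact absurd hc.2 (by norm_num; linarith))
    (by intro x hx; rw [abs_of_neg (by linarith [hx.2] : x < 0)]; linarith [hx.2])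
  have e : (-b)⁻¹ - (-a)⁻¹ = a⁻¹ - b⁻¹ := by simp [inv_neg]; ring
  rw [e]; exact this

-- tail bounds
include htop
lemma eta_tail_top : ∀ x : ℝ, 1 ≤ x → ηr - η x ≤ B * x⁻¹ := by
  intro x hx
  have hlim : Tendsto (fun b => η b - η x) atTop (nhds (ηr - η x)) :=
    htop.sub_const _
  have hev : ∀ᶠ b in atTop, η b - η x ≤ B * x⁻¹ := by
    filter_upwards [eventually_ge_atTop x] with b hb
    have h1 := eta_sub_le_pos hη hη' hB x b hx hb
    have hbpos : (0:ℝ) < b := by linarith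
    have hB0 : 0 ≤ B := by
      have := lt_of_lt_of_le (hη' 1) (by simpa using hB 1 (by norm_num))
      nlinarith [this]
    nlinarith [inv_pos.2 hbpos]
  linarith [le_of_tendsto hlim hev]

omit htop
include hbot
lemma eta_tail_bot : ∀ x : ℝ, x ≤ -1 → η x - ηl ≤ B * (-x)⁻¹ := by
  intro x hx
  have hlim : Tendsto (fun a => η x - η a) atBot (nhds (η x - ηl)) :=
    tendsto_const_nhds.sub hbot
  have hev : ∀ᶠ a in atBot, η x - η a ≤ B * (-x)⁻¹ := by
    filter_upwards [eventually_le_atBot x] with a ha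
    have h1 := eta_sub_le_neg hη hη' hB a x ha hx
    have hapos : (0:ℝ) < -a := by linarith
    have hB0 : 0 ≤ B := by
      have := lt_of_lt_of_le (hη' 1) (by simpa using hB 1 (by norm_num))
      nlinarith [this]
    nlinarith [inv_pos.2 hapos]
  linarith [le_of_tendsto hlim hev]

omit hbot
lemma eta_deriv_glob_bound : ∃ P : ℝ, 0 < P ∧ ∀ t, deriv η t ≤ P := by
  obtain ⟨C, hC⟩ := (isCompact_Icc (a := (-1:ℝ)) (b := 1)).exists_bound_of_continuousOn
    (eta_deriv_cont hη).continuousOn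
  refine ⟨max C B + 1, ?_, ?_⟩
  · have := hC 0 (by norm_num)
    have h0 := hη' 0
    have : 0 < C := lt_of_lt_of_le h0 (le_trans (le_abs_self _) (this))
    have : 0 ≤ max C B := le_trans this.le (le_max_left _ _)
    linarith
  · intro t
    rcases le_or_gt (|t|) 1 with h | h
    · have := hC t (abs_le.mp h)
      have := le_trans (le_abs_self _) this
      have := le_trans this (le_max_left C B)
      linarith
    · have h1 := hB t h.le
      have ht2 : 1 ≤ |t|^2 := one_le_pow₀ h.le
      have hB0 : 0 ≤ B := by
        have := lt_of_lt_of_le (hη' 1) (by simpa using hB 1 (by norm_num))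
        linarith
      have : B / |t|^2 ≤ B := by
        rw [div_le_iff₀ (by positivity)]; nlinarith
      linarith [le_trans h1 this, le_max_right C B]

end Basics


section Part2
variable {ηl ηr B P : ℝ} {η : ℝ → ℝ}
  (hη : ContDiff ℝ 2 η)
  (hη' : ∀ x, 0 < deriv η x)
  (hbot : Tendsto η atBot (nhds ηl)) (htop : Tendsto η atTop (nhds ηr))
  (hB : ∀ x : ℝ, 1 ≤ |x| → deriv η x ≤ B / |x| ^ 2)
  (hP : ∀ t, deriv η t ≤ P)

-- assumed results from basics (restated as hypotheses to develop independently; will merge later)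
variable (eta_diff : ∀ x, DifferentiableAt ℝ η x)
  (eta_deriv_cont : Continuous (deriv η))
  (eta_mono : StrictMono η)
  (eta_ftc : ∀ a b : ℝ, ∫ t in a..b, deriv η t = η b - η a)
  (eta_lt_top : ∀ x, η x < ηr)
  (eta_gt_bot : ∀ x, ηl < η x)
  (eta_sub_le_pos : ∀ a b : ℝ, 1 ≤ a → a ≤ b → η b - η a ≤ B * (a⁻¹ - b⁻¹))
  (eta_sub_le_neg : ∀ a b : ℝ, a ≤ b → b ≤ -1 → η b - η a ≤ B * ((-b)⁻¹ - (-a)⁻¹))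

include hη eta_diff eta_deriv_cont eta_mono eta_ftc eta_lt_top eta_gt_bot

lemma eta_cont : Continuous η := (hη.differentiable (by norm_num)).continuous

-- bracket
lemma br_nonneg : ∀ z s : ℝ, 0 ≤ s → 0 ≤ η (z+s) - η (z-s) := by
  intro z s hs
  have := eta_mono.le_iff_le.2 (by linarith : z - s ≤ z + s)
  linarith

lemma br_le_m : ∀ z s : ℝ, η (z+s) - η (z-s) ≤ ηr - ηl := by
  intro z s
  have h1 := eta_lt_top (z+s)
  have h2 := eta_gt_bot (z-s)
  linarith

include hP hη'
lemma br_le_P : ∀ z s : ℝ, 0 ≤ s → η (z+s) - η (z-s) ≤ 2*P*s := by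
  intro z s hs
  have h0 : η (z+s) - η (z-s) = ∫ t in (z-s)..(z+s), deriv η t := (eta_ftc _ _).symm
  have h1 : ‖∫ t in (z-s)..(z+s), deriv η t‖ ≤ P * |(z+s)-(z-s)| := by
    apply intervalIntegral.norm_integral_le_of_norm_le_const
    intro t _
    rw [Real.norm_eq_abs, abs_of_pos (hη' t)]
    exact hP t
  rw [← h0] at h1
  have h2 : |(z+s)-(z-s)| = 2*s := by rw [abs_of_nonneg (by linarith)]; ring
  calc η (z+s) - η (z-s) ≤ ‖η (z+s) - η (z-s)‖ := le_abs_self _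
    _ ≤ P * (2*s) := by rw [← h2]; exact h1
    _ = 2*P*s := by ring
omit hP

end Part2

section Phi
variable (η : ℝ → ℝ)

noncomputable def Phi (x : ℝ) : ℝ := ∫ t in (0:ℝ)..x, η t

noncomputable def SPhi (z y : ℝ) : ℝ := Phi η (z+y) - 2 * Phi η z + Phi η (z-y)

noncomputable def Dq (z y : ℝ) : ℝ := η (z+y) - 2 * η z + η (z-y)

variable {η}

lemma Phi_hasDerivAt (hc : Continuous η) : ∀ x, HasDerivAt (Phi η) (η x) x := by
  intro x
  exact intervalIntegral.integral_hasDerivAt_right (hc.intervalIntegrable _ _)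
    (hc.stronglyMeasurableAtFilter _ _) hc.continuousAt

lemma Phi_cont (hc : Continuous η) : Continuous (Phi η) :=
  (fun x => ((Phi_hasDerivAt hc x).differentiableAt : DifferentiableAt ℝ (Phi η) x)) |>
    fun h => Differentiable.continuous h

lemma SPhi_hasDerivAt_y (hc : Continuous η) (z : ℝ) :
    ∀ y, HasDerivAt (fun y => SPhi η z y) (η (z+y) - η (z-y)) y := by
  intro y
  unfold SPhi
  have h1 : HasDerivAt (fun y : ℝ => Phi η (z+y)) (η (z+y)) y := by
    exact ((Phi_hasDerivAt hc (z+y)).comp y ((hasDerivAt_id y).const_add z)).congr_deriv (by ring)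
  have h2 : HasDerivAt (fun y : ℝ => Phi η (z-y)) (-η (z-y)) y := by
    exact ((Phi_hasDerivAt hc (z-y)).comp y ((hasDerivAt_id y).neg.const_add z)).congr_deriv (by ring)
  exact ((h1.sub_const (2 * Phi η z)).add h2).congr_deriv (by ring)

lemma SPhi_hasDerivAt_z (hc : Continuous η) (y : ℝ) :
    ∀ z, HasDerivAt (fun z => SPhi η z y) (Dq η z y) z := by
  intro z
  unfold SPhi Dq
  have h1 : HasDerivAt (fun z : ℝ => Phi η (z+y)) (η (z+y)) z := by
    exact ((Phi_hasDerivAt hc (z+y)).comp z ((hasDerivAt_id z).add_const y)).congr_deriv (by ring)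
  have h2 : HasDerivAt (fun z : ℝ => Phi η (z-y)) (η (z-y)) z := by
    exact ((Phi_hasDerivAt hc (z-y)).comp z ((hasDerivAt_id z).sub_const y)).congr_deriv (by ring)
  have h3 : HasDerivAt (fun z : ℝ => 2 * Phi η z) (2 * η z) z :=
    ((Phi_hasDerivAt hc z)).const_mul 2
  exact ((h1.sub h3).add h2).congr_deriv (by ring)

lemma SPhi_eq (hc : Continuous η) (z y : ℝ) :
    SPhi η z y = ∫ s in (0:ℝ)..y, (η (z+s) - η (z-s)) := by
  have := intervalIntegral.integral_eq_sub_of_hasDerivAt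
    (a := (0:ℝ)) (b := y)
    (f := fun y => SPhi η z y) (f' := fun s => η (z+s) - η (z-s))
    (fun s _ => SPhi_hasDerivAt_y hc z s)
    (Continuous.intervalIntegrable
      ((hc.comp (continuous_const.add continuous_id)).sub
        (hc.comp (continuous_const.sub continuous_id))) _ _)
  rw [this]
  have h0 : SPhi η z 0 = 0 := by unfold SPhi; simp; ring
  simp only [h0]; ring

lemma Dq_eq (hη : ContDiff ℝ 2 η) (z y : ℝ) :
    Dq η z y = ∫ s in (0:ℝ)..y, (deriv η (z+s) - deriv η (z-s)) := by
  have hd : ∀ x, DifferentiableAt ℝ η x := fun x =>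
    (hη.differentiable (by norm_num)).differentiableAt
  have hdc : Continuous (deriv η) := hη.continuous_deriv (by norm_num)
  have hder : ∀ s : ℝ, HasDerivAt (fun s => Dq η z s) (deriv η (z+s) - deriv η (z-s)) s := by
    intro s
    unfold Dq
    have h1 : HasDerivAt (fun s : ℝ => η (z+s)) (deriv η (z+s)) s := by
      exact (((hd (z+s)).hasDerivAt).comp s ((hasDerivAt_id s).const_add z)).congr_deriv (by ring)
    have h2 : HasDerivAt (fun s : ℝ => η (z-s)) (-deriv η (z-s)) s := by
      exact (((hd (z-s)).hasDerivAt).comp s ((hasDerivAt_id s).neg.const_add z)).congr_deriv (by ring)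
    exact ((h1.sub_const (2 * η z)).add h2).congr_deriv (by ring)
  have := intervalIntegral.integral_eq_sub_of_hasDerivAt
    (a := (0:ℝ)) (b := y) (fun s _ => hder s)
    (Continuous.intervalIntegrable
      ((hdc.comp (continuous_const.add continuous_id)).sub
        (hdc.comp (continuous_const.sub continuous_id))) _ _)
  rw [this]
  have h0 : Dq η z 0 = 0 := by unfold Dq; simp; ring
  simp only [h0]; ring

end Phi

lemma integrableOn_Ioi_inv_sq {a : ℝ} (ha : 0 < a) :
    IntegrableOn (fun y : ℝ => (y^2)⁻¹) (Ioi a) volume := by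
  apply integrableOn_Ioi_deriv_of_nonneg (g := fun y => -y⁻¹)
  · exact ((continuousAt_inv₀ ha.ne').neg).continuousWithinAt
  · intro x hx
    have hx0 : x ≠ 0 := (lt_trans ha hx).ne'
    exact (hasDerivAt_inv hx0).neg.congr_deriv (by ring)
  · intro x hx
    have : (0:ℝ) < x := lt_trans ha hx
    positivity
  · simpa using tendsto_inv_atTop_zero.neg

lemma integrable_ite_Ioi (c C1 C2 : ℝ) (hc : 0 < c) :
    IntegrableOn (fun y : ℝ => if y ≤ c then C1 else C2*(y^2)⁻¹) (Ioi (0:ℝ)) volume := by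
  rw [← Ioc_union_Ioi_eq_Ioi hc.le]
  apply IntegrableOn.union
  · apply IntegrableOn.congr_fun (f := fun _ => C1)
    · exact integrableOn_const (lt_top_iff_ne_top.1 (by rw [Real.volume_Ioc]; exact ENNReal.ofReal_lt_top))
    · intro y hy; simp [hy.2]
    · exact measurableSet_Ioc
  · apply IntegrableOn.congr_fun (f := fun y => C2*(y^2)⁻¹)
    · exact (integrableOn_Ioi_inv_sq hc).const_mul C2
    · intro y hy; simp [not_le.2 (mem_Ioi.1 hy)]
    · exact measurableSet_Ioi

section Part3
variable {ηl ηr B P m : ℝ} {η : ℝ → ℝ}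
  (hc : Continuous η)
  (hm : m = ηr - ηl)
  (hB0 : 0 ≤ B) (hP0 : 0 ≤ P)
  (hbr0 : ∀ z s : ℝ, 0 ≤ s → 0 ≤ η (z+s) - η (z-s))
  (hbrm : ∀ z s : ℝ, η (z+s) - η (z-s) ≤ m)
  (hbrP : ∀ z s : ℝ, 0 ≤ s → η (z+s) - η (z-s) ≤ 2*P*s)
  (hχa : ∀ z s : ℝ, 0 ≤ z → 0 ≤ η (z+s) - η s ∧ η (z+s) - η s ≤ m)
  (hχb : ∀ z s : ℝ, 0 ≤ z → 0 ≤ η (z-s) - η (-s) ∧ η (z-s) - η (-s) ≤ m)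
  (hχc : ∀ z s : ℝ, 1 ≤ z → z + 1 ≤ s → η (z+s) - η s ≤ B*z*(s^2)⁻¹)
  (hχd : ∀ z s : ℝ, 1 ≤ z → z + 1 ≤ s → η (z-s) - η (-s) ≤ B*z*((s-z)^2)⁻¹)

include hc hbr0 hbrP hP0

lemma SPhi_abs_le_quad : ∀ z y : ℝ, 0 ≤ y → |SPhi η z y| ≤ P*y^2 := by
  intro z y hy
  rw [SPhi_eq hc]
  have h1 : ‖∫ s in (0:ℝ)..y, (η (z+s) - η (z-s))‖ ≤ |∫ s in (0:ℝ)..y, 2*P*s| := by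
    apply intervalIntegral.norm_integral_le_abs_of_norm_le
    · rw [ae_restrict_iff' measurableSet_uIoc]
      apply Eventually.of_forall
      intro s hs
      rw [uIoc_of_le hy] at hs
      rw [Real.norm_eq_abs, abs_of_nonneg (hbr0 z s hs.1.le)]
      exact hbrP z s hs.1.le
    · apply Continuous.intervalIntegrable; fun_prop
  have h2 : ∫ s in (0:ℝ)..y, 2*P*s = P*y^2 := by
    rw [intervalIntegral.integral_const_mul, integral_id]
    ring
  rw [h2] at h1
  simpa [abs_of_nonneg (show (0:ℝ) ≤ P*y^2 by positivity)] using h1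

include hm hχa hχb hχc hχd hB0 hbrm

lemma SPhi_diff_le : ∀ z y : ℝ, 1 ≤ z → 0 ≤ y →
    |SPhi η z y - SPhi η 0 y| ≤ m*(z+1) + 2*B*z := by
  intro z y hz hy
  have hz0 : (0:ℝ) ≤ z := by linarith
  have hm0 : 0 ≤ m := le_trans (hbr0 0 0 le_rfl) (hbrm 0 0)
  set χ : ℝ → ℝ := fun s => (η (z+s) - η s) - (η (z-s) - η (-s)) with hχ
  have hχcont : Continuous χ := by fun_prop
  have key : SPhi η z y - SPhi η 0 y = ∫ s in (0:ℝ)..y, χ s := by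
    rw [SPhi_eq hc, SPhi_eq hc, ← intervalIntegral.integral_sub
      (Continuous.intervalIntegrable (by fun_prop) _ _)
      (Continuous.intervalIntegrable (by fun_prop) _ _)]
    apply intervalIntegral.integral_congr
    intro s _
    simp only [hχ, zero_add, zero_sub]
    ring
  have hχm : ∀ s : ℝ, |χ s| ≤ m := by
    intro s
    obtain ⟨h1, h2⟩ := hχa z s hz0
    obtain ⟨h3, h4⟩ := hχb z s hz0
    rw [abs_le]; constructor <;> simp only [hχ] <;> linarith
  have bound1 : ∀ a b : ℝ, |∫ s in a..b, χ s| ≤ m * |b - a| := by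
    intro a b
    have := intervalIntegral.norm_integral_le_of_norm_le_const (a := a) (b := b)
      (f := χ) (C := m) (fun s _ => by rw [Real.norm_eq_abs]; exact hχm s)
    simpa using this
  rcases le_or_gt y (z+1) with hcase | hcase
  · calc |SPhi η z y - SPhi η 0 y| = |∫ s in (0:ℝ)..y, χ s| := by rw [key]
      _ ≤ m * |y - 0| := bound1 0 y
      _ ≤ m * (z+1) := by rw [sub_zero, abs_of_nonneg hy]; nlinarith
      _ ≤ m*(z+1) + 2*B*z := by nlinarith
  · have hsplit : ∫ s in (0:ℝ)..y, χ s
        = (∫ s in (0:ℝ)..(z+1), χ s) + ∫ s in (z+1)..y, χ s :=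
      (intervalIntegral.integral_add_adjacent_intervals
        (hχcont.intervalIntegrable _ _) (hχcont.intervalIntegrable _ _)).symm
    set ρ : ℝ → ℝ := fun s => B*z*((s^2)⁻¹ + ((s-z)^2)⁻¹) with hρ
    have hρcont : ContinuousOn ρ (uIcc (z+1) y) := by
      rw [uIcc_of_le hcase.le]
      apply ContinuousOn.mul continuousOn_const
      apply ContinuousOn.add
      · apply ContinuousOn.inv₀ (by fun_prop)
        intro s hs
        have : (0:ℝ) < s := by have := hs.1; linarith
        positivity
      · apply ContinuousOn.inv₀ (by fun_prop)
        intro s hs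
        have : (0:ℝ) < s - z := by have := hs.1; linarith
        positivity
    have hbnd2 : ‖∫ s in (z+1)..y, χ s‖ ≤ |∫ s in (z+1)..y, ρ s| := by
      apply intervalIntegral.norm_integral_le_abs_of_norm_le
      · rw [ae_restrict_iff' measurableSet_uIoc]
        apply Eventually.of_forall
        intro s hs
        rw [uIoc_of_le hcase.le] at hs
        have hs1 : z + 1 ≤ s := hs.1.le
        obtain ⟨h1, _⟩ := hχa z s hz0
        obtain ⟨h3, _⟩ := hχb z s hz0
        have h2 := hχc z s hz hs1
        have h4 := hχd z s hz hs1
        have hss : (0:ℝ) < s := by linarith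
        have hsz : (0:ℝ) < s - z := by linarith
        rw [Real.norm_eq_abs, abs_le]
        have hq1 : (0:ℝ) ≤ B*z*(s^2)⁻¹ := by positivity
        have hq2 : (0:ℝ) ≤ B*z*((s-z)^2)⁻¹ := by positivity
        constructor <;> simp only [hχ, hρ] <;> linarith
      · exact hρcont.intervalIntegrable
    have hval : ∫ s in (z+1)..y, ρ s
        = B*z*(((z+1)⁻¹ - y⁻¹) + (1⁻¹ - (y-z)⁻¹)) := by
      simp only [hρ]
      rw [intervalIntegral.integral_const_mul]
      have e1 : ∫ s in (z+1)..y, ((s^2)⁻¹ + ((s-z)^2)⁻¹)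
          = (∫ s in (z+1)..y, (s^2)⁻¹) + ∫ s in (z+1)..y, ((s-z)^2)⁻¹ := by
        apply intervalIntegral.integral_add
        · apply ContinuousOn.intervalIntegrable
          apply ContinuousOn.inv₀ (by fun_prop)
          intro s hs
          rw [uIcc_of_le hcase.le] at hs
          have : (0:ℝ) < s := by have := hs.1; linarith
          positivity
        · apply ContinuousOn.intervalIntegrable
          apply ContinuousOn.inv₀ (by fun_prop)
          intro s hs
          rw [uIcc_of_le hcase.le] at hs
          have : (0:ℝ) < s - z := by have := hs.1; linarith
          positivity
      rw [e1]
      have e2 : ∫ s in (z+1)..y, (s^2)⁻¹ = (z+1)⁻¹ - y⁻¹ := by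
        apply integ_inv_sq
        rw [uIcc_of_le hcase.le]
        intro hmem
        have := hmem.1; linarith
      have e3 : ∫ s in (z+1)..y, ((s-z)^2)⁻¹ = 1⁻¹ - (y-z)⁻¹ := by
        rw [intervalIntegral.integral_comp_sub_right (fun u => (u^2)⁻¹) z]
        have : z + 1 - z = (1:ℝ) := by ring
        rw [this]
        apply integ_inv_sq
        rw [uIcc_of_le (by linarith : (1:ℝ) ≤ y - z)]
        intro hmem
        have := hmem.1; linarith
      rw [e2, e3]
    have hρle : |∫ s in (z+1)..y, ρ s| ≤ 2*B*z := by
      rw [hval]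
      have h1 : (0:ℝ) < y := by linarith
      have h2 : (0:ℝ) < y - z := by linarith
      have h3 : (0:ℝ) < z + 1 := by linarith
      have i1 : (0:ℝ) ≤ (z+1)⁻¹ - y⁻¹ := by
        have : y⁻¹ ≤ (z+1)⁻¹ := inv_anti₀ h3 hcase.le
        linarith
      have i2 : (0:ℝ) ≤ 1⁻¹ - (y-z)⁻¹ := by
        have : (y-z)⁻¹ ≤ 1⁻¹ := inv_anti₀ one_pos (by linarith)
        simpa using this
      have i3 : (z+1)⁻¹ ≤ 1 := by
        rw [inv_le_one_iff₀]; right; linarith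
      have i4 : (0:ℝ) ≤ y⁻¹ := by positivity
      have i5 : (0:ℝ) ≤ (y-z)⁻¹ := by positivity
      rw [abs_of_nonneg (by positivity)]
      have hs2 : ((z+1)⁻¹ - y⁻¹) + (1⁻¹ - (y-z)⁻¹) ≤ 2 := by
        simp only [inv_one]; linarith
      have hBz : 0 ≤ B*z := mul_nonneg hB0 hz0
      have := mul_le_mul_of_nonneg_left hs2 hBz
      linarith
    calc |SPhi η z y - SPhi η 0 y| = |(∫ s in (0:ℝ)..(z+1), χ s) + ∫ s in (z+1)..y, χ s| := by
          rw [key, hsplit]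
      _ ≤ |∫ s in (0:ℝ)..(z+1), χ s| + |∫ s in (z+1)..y, χ s| := abs_add_le _ _
      _ ≤ m * |z+1-0| + 2*B*z := by
          have := bound1 0 (z+1)
          have h2 := le_trans hbnd2 hρle
          rw [Real.norm_eq_abs] at h2
          linarith
      _ = m*(z+1) + 2*B*z := by rw [sub_zero, abs_of_nonneg (by linarith)]

end Part3

section Part4
variable {ηl ηr B P m : ℝ} {η : ℝ → ℝ}

lemma Fz_integrable (hc : Continuous η) (hP0 : 0 ≤ P) (hm0 : 0 ≤ m) (hB0 : 0 ≤ B)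
    (hquad : ∀ z y : ℝ, 0 ≤ y → |SPhi η z y| ≤ P*y^2)
    (hdiff : ∀ z y : ℝ, 1 ≤ z → 0 ≤ y → |SPhi η z y - SPhi η 0 y| ≤ m*(z+1) + 2*B*z)
    (z : ℝ) (hz : 1 ≤ z) :
    IntegrableOn (fun y => (SPhi η z y - SPhi η 0 y)/y^2) (Ioi (0:ℝ)) volume := by
  have hPc : Continuous (Phi η) := Phi_cont hc
  apply Integrable.mono' (integrable_ite_Ioi 1 (2*P) (m*(z+1)+2*B*z) one_pos)
  · apply ContinuousOn.aestronglyMeasurable _ measurableSet_Ioi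
    apply ContinuousOn.div
    · apply Continuous.continuousOn; unfold SPhi; fun_prop
    · fun_prop
    · intro y hy
      exact pow_ne_zero 2 (ne_of_gt (mem_Ioi.1 hy))
  · rw [ae_restrict_iff' measurableSet_Ioi]
    apply Eventually.of_forall
    intro y hy
    have hy0 : (0:ℝ) < y := mem_Ioi.1 hy
    have hy2 : (0:ℝ) < y^2 := by positivity
    rw [Real.norm_eq_abs, abs_div, abs_of_pos hy2]
    rcases le_or_gt y 1 with h1 | h1
    · rw [if_pos h1]
      have q1 := hquad z y hy0.le
      have q2 := hquad 0 y hy0.le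
      have : |SPhi η z y - SPhi η 0 y| ≤ 2*P*y^2 := by
        calc |SPhi η z y - SPhi η 0 y| ≤ |SPhi η z y| + |SPhi η 0 y| := abs_sub _ _
          _ ≤ 2*P*y^2 := by linarith
      rw [div_le_iff₀ hy2]
      linarith [this]
    · rw [if_neg (not_le.2 h1)]
      have := hdiff z y hz hy0.le
      rw [div_le_iff₀ hy2]
      have e : (m*(z+1)+2*B*z)*(y^2)⁻¹*y^2 = m*(z+1)+2*B*z := by
        field_simp
      rw [e]
      exact this

lemma N_hasDerivAt (hη : ContDiff ℝ 2 η) (hm0 : 0 ≤ m) (hmono : Monotone η)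
    (hbrm : ∀ z s : ℝ, η (z+s) - η (z-s) ≤ m)
    (hFint : ∀ z : ℝ, 1 ≤ z →
      IntegrableOn (fun y => (SPhi η z y - SPhi η 0 y)/y^2) (Ioi (0:ℝ)) volume)
    (z : ℝ) (hz : 1 ≤ z) :
    IntegrableOn (fun y => Dq η z y / y^2) (Ioi (0:ℝ)) volume ∧
    HasDerivAt (fun u => ∫ y in Ioi (0:ℝ), (SPhi η u y - SPhi η 0 y)/y^2)
      (∫ y in Ioi (0:ℝ), Dq η z y / y^2) z := by
  have hc : Continuous η := (hη.differentiable (by norm_num)).continuous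
  have hd1 : ContDiff ℝ 1 (deriv η) := (contDiff_succ_iff_deriv.mp (by exact_mod_cast hη)).2.2
  have h2c : Continuous (deriv (deriv η)) := hd1.continuous_deriv le_rfl
  obtain ⟨Mz, hMz⟩ := (isCompact_Icc (a := z-2) (b := z+2)).exists_bound_of_continuousOn
      h2c.continuousOn
  have hMz0 : 0 ≤ Mz := le_trans (norm_nonneg _) (hMz z (by constructor <;> linarith))
  have dbound : ∀ u ∈ Metric.ball z 1, ∀ s : ℝ, 0 ≤ s → s ≤ 1 →
      |deriv η (u+s) - deriv η (u-s)| ≤ 2*Mz*s := by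
    intro u hu s hs0 hs1
    rw [Metric.mem_ball, Real.dist_eq, abs_lt] at hu
    have e : deriv η (u+s) - deriv η (u-s) = ∫ t in (u-s)..(u+s), deriv (deriv η) t :=
      (intervalIntegral.integral_deriv_eq_sub
        (fun t _ => (hd1.differentiable (by norm_num)).differentiableAt)
        (h2c.continuousOn.intervalIntegrable)).symm
    rw [e]
    have h1 : ‖∫ t in (u-s)..(u+s), deriv (deriv η) t‖ ≤ Mz * |(u+s)-(u-s)| := by
      apply intervalIntegral.norm_integral_le_of_norm_le_const
      intro t ht
      rw [uIoc_of_le (by linarith : u-s ≤ u+s)] at ht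
      apply hMz
      constructor
      · linarith [ht.1]
      · linarith [ht.2]
    have e2 : |(u+s)-(u-s)| = 2*s := by rw [abs_of_nonneg (by linarith)]; ring
    rw [e2] at h1
    calc |∫ t in (u-s)..(u+s), deriv (deriv η) t| ≤ Mz * (2*s) := h1
      _ = 2*Mz*s := by ring
  have Dq_small : ∀ u ∈ Metric.ball z 1, ∀ y : ℝ, 0 < y → y ≤ 1 → |Dq η u y| ≤ Mz*y^2 := by
    intro u hu y hy0 hy1
    rw [Dq_eq hη]
    have h1 : ‖∫ s in (0:ℝ)..y, (deriv η (u+s) - deriv η (u-s))‖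
        ≤ |∫ s in (0:ℝ)..y, 2*Mz*s| := by
      apply intervalIntegral.norm_integral_le_abs_of_norm_le
      · rw [ae_restrict_iff' measurableSet_uIoc]
        apply Eventually.of_forall
        intro s hs
        rw [uIoc_of_le hy0.le] at hs
        rw [Real.norm_eq_abs]
        exact dbound u hu s hs.1.le (le_trans hs.2 hy1)
      · apply Continuous.intervalIntegrable; fun_prop
    have h2 : ∫ s in (0:ℝ)..y, 2*Mz*s = Mz*y^2 := by
      rw [intervalIntegral.integral_const_mul, integral_id]; ring
    rw [h2] at h1
    simpa [abs_of_nonneg (show (0:ℝ) ≤ Mz*y^2 by positivity)] using h1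
  have Dq_big : ∀ u y : ℝ, 0 ≤ y → |Dq η u y| ≤ m := by
    intro u y hy
    have h1 : 0 ≤ η (u+y) - η u := by
      have := hmono (by linarith : u ≤ u + y); linarith
    have h2 : 0 ≤ η u - η (u-y) := by
      have := hmono (by linarith : u - y ≤ u); linarith
    have h3 := hbrm u y
    unfold Dq
    rw [abs_le]
    constructor <;> linarith
  have key := hasDerivAt_integral_of_dominated_loc_of_deriv_le (𝕜 := ℝ)
    (μ := volume.restrict (Ioi (0:ℝ)))
    (F := fun u y => (SPhi η u y - SPhi η 0 y)/y^2)
    (F' := fun u y => Dq η u y / y^2)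
    (x₀ := z)
    (bound := fun y => if y ≤ 1 then Mz else m*(y^2)⁻¹)
    (s := Metric.ball z 1) (Metric.ball_mem_nhds z one_pos)
    ?_ (hFint z hz) ?_ ?_ ?_ ?_
  · exact ⟨key.1, key.2⟩
  · apply Eventually.of_forall
    intro u
    apply ContinuousOn.aestronglyMeasurable _ measurableSet_Ioi
    apply ContinuousOn.div
    · apply Continuous.continuousOn
      have := Phi_cont hc
      unfold SPhi; fun_prop
    · fun_prop
    · intro y hy
      exact pow_ne_zero 2 (ne_of_gt (mem_Ioi.1 hy))
  · apply ContinuousOn.aestronglyMeasurable _ measurableSet_Ioi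
    apply ContinuousOn.div
    · apply Continuous.continuousOn; unfold Dq; fun_prop
    · fun_prop
    · intro y hy
      exact pow_ne_zero 2 (ne_of_gt (mem_Ioi.1 hy))
  · rw [ae_restrict_iff' measurableSet_Ioi]
    apply Eventually.of_forall
    intro y hy u hu
    have hy0 : (0:ℝ) < y := mem_Ioi.1 hy
    have hy2 : (0:ℝ) < y^2 := by positivity
    rw [Real.norm_eq_abs, abs_div, abs_of_pos hy2]
    rcases le_or_gt y 1 with h1 | h1
    · rw [if_pos h1, div_le_iff₀ hy2]
      have := Dq_small u hu y hy0 h1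
      nlinarith [this]
    · rw [if_neg (not_le.2 h1), div_le_iff₀ hy2]
      have := Dq_big u y hy0.le
      have e : m*(y^2)⁻¹*y^2 = m := by field_simp
      rw [e]
      exact this
  · exact integrable_ite_Ioi 1 Mz m one_pos
  · rw [ae_restrict_iff' measurableSet_Ioi]
    apply Eventually.of_forall
    intro y hy u hu
    exact ((SPhi_hasDerivAt_z hc y u).sub_const _).div_const _

end Part4

noncomputable def psiF (η : ℝ → ℝ) (lam x s : ℝ) : ℝ :=
  (η (lam*x+s) - η (lam*x-s)) - (η (x+s) - η (x-s))

section Part5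
variable {ηl ηr B m lam : ℝ} {η : ℝ → ℝ}
  (hc : Continuous η)
  (hlam : 1 < lam)
  (hm0 : 0 ≤ m) (hB0 : 0 ≤ B)
  (hmono : Monotone η)
  (hbrm : ∀ z s : ℝ, η (z+s) - η (z-s) ≤ m)
  (hsubp : ∀ a b : ℝ, 1 ≤ a → a ≤ b → η b - η a ≤ B * (a⁻¹ - b⁻¹))
  (hsubn : ∀ a b : ℝ, a ≤ b → b ≤ -1 → η b - η a ≤ B * ((-b)⁻¹ - (-a)⁻¹))
  (htop : Tendsto η atTop (nhds ηr)) (hbot : Tendsto η atBot (nhds ηl))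

include hmono hbrm

lemma psi_abs_le_m : ∀ x s : ℝ, 0 ≤ s → |psiF η lam x s| ≤ m := by
  intro x s hs
  have n1 : 0 ≤ η (x+s) - η (x-s) := sub_nonneg.2 (hmono (by linarith))
  have n2 : 0 ≤ η (lam*x+s) - η (lam*x-s) := sub_nonneg.2 (hmono (by linarith))
  have b1 := hbrm x s
  have b2 := hbrm (lam*x) s
  unfold psiF; rw [abs_le]; constructor <;> linarith

omit hbrm
include hlam hB0 hsubp

lemma psi_small : ∀ x s : ℝ, 2 ≤ x → 0 ≤ s → s ≤ x/2 →
    |psiF η lam x s| ≤ 8*B*s/x^2 := by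
  intro x s hx hs0 hs2
  have hx0 : (0:ℝ) < x := by linarith
  have hbr : ∀ z, x ≤ z → η (z+s) - η (z-s) ≤ 8*B*s/x^2 := by
    intro z hz
    have h1 : 1 ≤ z - s := by linarith
    have h2 := hsubp (z-s) (z+s) h1 (by linarith)
    have hzs : (0:ℝ) < z - s := by linarith
    have hzp : (0:ℝ) < z + s := by linarith
    have e : (z-s)⁻¹ - (z+s)⁻¹ = 2*s/((z-s)*(z+s)) := by field_simp; ring
    have hle : 2*s/((z-s)*(z+s)) ≤ 8*s/x^2 := by
      rw [div_le_div_iff₀ (by positivity) (by positivity)]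
      have q1 : x/2 ≤ z - s := by linarith
      have q2 : x/2 ≤ z + s := by linarith
      nlinarith [mul_le_mul q1 q2 (by linarith) (by linarith)]
    calc η (z+s) - η (z-s) ≤ B*((z-s)⁻¹ - (z+s)⁻¹) := h2
      _ = B*(2*s/((z-s)*(z+s))) := by rw [e]
      _ ≤ B*(8*s/x^2) := mul_le_mul_of_nonneg_left hle hB0
      _ = 8*B*s/x^2 := by ring
  have b1 := hbr x le_rfl
  have b2 := hbr (lam*x) (by nlinarith)
  have n1 : 0 ≤ η (x+s) - η (x-s) := sub_nonneg.2 (hmono (by linarith))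
  have n2 : 0 ≤ η (lam*x+s) - η (lam*x-s) := sub_nonneg.2 (hmono (by linarith))
  unfold psiF; rw [abs_le]; constructor <;> linarith

include hsubn

lemma psi_tail : ∀ x u : ℝ, 2 ≤ x → 2*lam ≤ u →
    |psiF η lam x (x*u)| ≤ 2*B*(lam-1)*(u^2)⁻¹ := by
  intro x u hx hu
  have hx0 : (0:ℝ) < x := by linarith
  have hlam0 : (0:ℝ) < lam := by linarith
  have hu0 : (0:ℝ) < u := lt_of_lt_of_le (by positivity) hu
  set s := x*u with hs
  have hs2 : 2*lam*x ≤ s := by rw [hs]; nlinarith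
  have hsx : (0:ℝ) < s := by rw [hs]; positivity
  have hlx : x ≤ lam*x := by nlinarith
  have hslx : lam*x + lam*x ≤ s := by nlinarith
  have hb1 : η (lam*x+s) - η (x+s) ≤ 4*B*(lam-1)*x/s^2 := by
    have h2 := hsubp (x+s) (lam*x+s) (by linarith) (by linarith)
    have hxs : (0:ℝ) < x + s := by linarith
    have hlxs : (0:ℝ) < lam*x + s := by linarith
    have e : (x+s)⁻¹ - (lam*x+s)⁻¹ = (lam-1)*x/((x+s)*(lam*x+s)) := by
      field_simp; ring
    have hle : (lam-1)*x/((x+s)*(lam*x+s)) ≤ 4*(lam-1)*x/s^2 := by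
      rw [div_le_div_iff₀ (by positivity) (by positivity)]
      nlinarith [mul_le_mul (by linarith : s ≤ x+s) (by linarith : s ≤ lam*x+s) hsx.le (by linarith : (0:ℝ) ≤ x+s)]
    calc η (lam*x+s) - η (x+s) ≤ B*((x+s)⁻¹ - (lam*x+s)⁻¹) := h2
      _ = B*((lam-1)*x/((x+s)*(lam*x+s))) := by rw [e]
      _ ≤ B*(4*(lam-1)*x/s^2) := mul_le_mul_of_nonneg_left hle hB0
      _ = 4*B*(lam-1)*x/s^2 := by ring
  have hb2 : η (lam*x-s) - η (x-s) ≤ 4*B*(lam-1)*x/s^2 := by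
    have h2 := hsubn (x-s) (lam*x-s) (by linarith) (by nlinarith)
    have hq1 : s/2 ≤ s - lam*x := by nlinarith
    have hq2 : s/2 ≤ s - x := by nlinarith
    have hp1 : (0:ℝ) < s - lam*x := by nlinarith
    have hp2 : (0:ℝ) < s - x := by nlinarith
    have e : (-(lam*x-s))⁻¹ - (-(x-s))⁻¹ = (lam-1)*x/((s-lam*x)*(s-x)) := by
      have e1 : -(lam*x-s) = s - lam*x := by ring
      have e2 : -(x-s) = s - x := by ring
      rw [e1, e2]
      field_simp; ring
    have hle : (lam-1)*x/((s-lam*x)*(s-x)) ≤ 4*(lam-1)*x/s^2 := by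
      rw [div_le_div_iff₀ (by positivity) (by positivity)]
      nlinarith [mul_le_mul hq1 hq2 (by linarith) (by linarith : (0:ℝ) ≤ s - lam*x)]
    calc η (lam*x-s) - η (x-s) ≤ B*((-(lam*x-s))⁻¹ - (-(x-s))⁻¹) := h2
      _ = B*((lam-1)*x/((s-lam*x)*(s-x))) := by rw [e]
      _ ≤ B*(4*(lam-1)*x/s^2) := mul_le_mul_of_nonneg_left hle hB0
      _ = 4*B*(lam-1)*x/s^2 := by ring
  have n1 : 0 ≤ η (lam*x+s) - η (x+s) := sub_nonneg.2 (hmono (by linarith))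
  have n2 : 0 ≤ η (lam*x-s) - η (x-s) := sub_nonneg.2 (hmono (by linarith))
  have habs : |psiF η lam x s| ≤ 4*B*(lam-1)*x/s^2 := by
    have eψ : psiF η lam x s = (η (lam*x+s) - η (x+s)) - (η (lam*x-s) - η (x-s)) := by
      unfold psiF; ring
    rw [eψ, abs_le]
    have h40 : (0:ℝ) ≤ 4*B*(lam-1)*x/s^2 := div_nonneg (by nlinarith) (by positivity)
    constructor <;> linarith
  have hconv : 4*B*(lam-1)*x/s^2 ≤ 2*B*(lam-1)*(u^2)⁻¹ := by
    rw [hs]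
    have e : 4*B*(lam-1)*x/(x*u)^2 = (4*B*(lam-1)/x)*(u^2)⁻¹ := by
      field_simp
    rw [e]
    apply mul_le_mul_of_nonneg_right _ (by positivity)
    rw [div_le_iff₀ hx0]
    nlinarith [mul_nonneg hB0 (by linarith : (0:ℝ) ≤ lam - 1)]
  exact le_trans habs hconv

omit hmono hlam hB0 hsubp hsubn
include hc

lemma h_ident (x v : ℝ) (hx : 0 < x) :
    (SPhi η (lam*x) (x*v) - SPhi η x (x*v))/x = ∫ u in (0:ℝ)..v, psiF η lam x (x*u) := by
  have h1 : SPhi η (lam*x) (x*v) - SPhi η x (x*v)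
      = ∫ s in (0:ℝ)..(x*v), psiF η lam x s := by
    rw [SPhi_eq hc, SPhi_eq hc, ← intervalIntegral.integral_sub
      (Continuous.intervalIntegrable (by fun_prop) _ _)
      (Continuous.intervalIntegrable (by fun_prop) _ _)]
    apply intervalIntegral.integral_congr
    intro s _
    unfold psiF
    ring
  have h2 := intervalIntegral.integral_comp_mul_left (a := (0:ℝ)) (b := v)
    (fun s => psiF η lam x s) hx.ne'
  rw [mul_zero] at h2
  rw [h1, h2, smul_eq_mul, div_eq_inv_mul]

include hc hlam hmono hbrm htop hbot

lemma h_lim (hmr : ηr - ηl = m) (v : ℝ) (hv : 0 < v) :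
    Tendsto (fun x => ∫ u in (0:ℝ)..v, psiF η lam x (x*u)) atTop
      (nhds (-m * (min v lam - min v 1))) := by
  have hIoc : (fun x => ∫ u in (0:ℝ)..v, psiF η lam x (x*u))
      = fun x => ∫ u in Ioc (0:ℝ) v, psiF η lam x (x*u) := by
    funext x; exact intervalIntegral.integral_of_le hv.le
  rw [hIoc]
  have hval : (∫ u in Ioc (0:ℝ) v, ((Ioo (1:ℝ) lam).indicator (fun _ => -m)) u)
      = -m * (min v lam - min v 1) := by
    rw [setIntegral_indicator measurableSet_Ioo, setIntegral_const, smul_eq_mul]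
    have hvol : volume (Ioc (0:ℝ) v ∩ Ioo 1 lam) = ENNReal.ofReal (min v lam - 1) := by
      apply le_antisymm
      · refine (measure_mono ?_).trans_eq (Real.volume_Ioc (a := 1) (b := min v lam))
        rintro u ⟨⟨hu1, hu2⟩, hu3, hu4⟩
        exact ⟨hu3, le_min hu2 hu4.le⟩
      · rw [← Real.volume_Ioo (a := 1) (b := min v lam)]
        apply measure_mono
        rintro u ⟨hu1, hu2⟩
        have h := lt_min_iff.1 hu2
        exact ⟨⟨by linarith, h.1.le⟩, hu1, h.2⟩
    rw [measureReal_def, hvol]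
    rcases le_or_gt 1 v with h1 | h1
    · rw [min_eq_right h1, ENNReal.toReal_ofReal
        (by have : 1 ≤ min v lam := le_min h1 hlam.le; linarith)]
      ring
    · rw [min_eq_left (by linarith : v ≤ lam), min_eq_left h1.le,
        ENNReal.ofReal_of_nonpos (by linarith)]
      simp
  rw [← hval]
  apply MeasureTheory.tendsto_integral_filter_of_dominated_convergence (bound := fun _ => m)
  · apply Eventually.of_forall
    intro x
    apply Continuous.aestronglyMeasurable
    unfold psiF
    fun_prop
  · filter_upwards [eventually_ge_atTop (0:ℝ)] with x hx
    rw [ae_restrict_iff' measurableSet_Ioc]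
    apply Eventually.of_forall
    intro u hu
    rw [Real.norm_eq_abs]
    exact psi_abs_le_m hmono hbrm x (x*u) (mul_nonneg hx hu.1.le)
  · exact integrableOn_const (lt_top_iff_ne_top.1 (by rw [Real.volume_Ioc]; exact ENNReal.ofReal_lt_top))
  · have hne : ∀ c : ℝ, ∀ᵐ u : ℝ, u ≠ c := by
      intro c
      have h0 : volume ({c} : Set ℝ) = 0 := measure_singleton c
      rw [ae_iff]
      convert h0 using 2
      ext u; simp
    have hae1 : ∀ᵐ u ∂(volume.restrict (Ioc (0:ℝ) v)), u ≠ 1 := ae_restrict_of_ae (hne 1)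
    have hae2 : ∀ᵐ u ∂(volume.restrict (Ioc (0:ℝ) v)), u ≠ lam := ae_restrict_of_ae (hne lam)
    filter_upwards [hae1, hae2, ae_restrict_mem measurableSet_Ioc] with u hu1 hu2 hu
    have hu0 : 0 < u := hu.1
    have tgen : ∀ c : ℝ, 0 < c → Tendsto (fun x : ℝ => η (c*x)) atTop (𝓝 ηr) :=
      fun c hc0 => htop.comp (Tendsto.const_mul_atTop hc0 tendsto_id)
    have tgen' : ∀ c : ℝ, c < 0 → Tendsto (fun x : ℝ => η (c*x)) atTop (𝓝 ηl) :=
      fun c hc0 => hbot.comp (Tendsto.const_mul_atTop_of_neg hc0 tendsto_id)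
    have e1 : (fun x : ℝ => psiF η lam x (x*u))
        = fun x => (η ((lam+u)*x) - η ((lam-u)*x)) - (η ((1+u)*x) - η ((1-u)*x)) := by
      funext x
      unfold psiF
      have a1 : lam*x + x*u = (lam+u)*x := by ring
      have a2 : lam*x - x*u = (lam-u)*x := by ring
      have a3 : x + x*u = (1+u)*x := by ring
      have a4 : x - x*u = (1-u)*x := by ring
      rw [a1, a2, a3, a4]
    rw [e1]
    have t1 : Tendsto (fun x : ℝ => η ((lam+u)*x)) atTop (𝓝 ηr) := tgen _ (by linarith)
    have t3 : Tendsto (fun x : ℝ => η ((1+u)*x)) atTop (𝓝 ηr) := tgen _ (by linarith)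
    rcases lt_trichotomy u 1 with hc1 | hc1 | hc1
    · have t2 : Tendsto (fun x : ℝ => η ((lam-u)*x)) atTop (𝓝 ηr) := tgen _ (by linarith)
      have t4 : Tendsto (fun x : ℝ => η ((1-u)*x)) atTop (𝓝 ηr) := tgen _ (by linarith)
      have hind : (Ioo (1:ℝ) lam).indicator (fun _ => -m) u = 0 := by
        apply Set.indicator_of_notMem
        rw [mem_Ioo]; push_neg; intro h; linarith
      rw [hind]
      have := (t1.sub t2).sub (t3.sub t4)
      simpa using this
    · exact absurd hc1 hu1
    · rcases lt_trichotomy u lam with hc2 | hc2 | hc2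
      · have t2 : Tendsto (fun x : ℝ => η ((lam-u)*x)) atTop (𝓝 ηr) := tgen _ (by linarith)
        have t4 : Tendsto (fun x : ℝ => η ((1-u)*x)) atTop (𝓝 ηl) := tgen' _ (by linarith)
        have hind : (Ioo (1:ℝ) lam).indicator (fun _ => -m) u = -m := by
          apply Set.indicator_of_mem
          exact ⟨hc1, hc2⟩
        rw [hind]
        have := (t1.sub t2).sub (t3.sub t4)
        have e2 : (ηr - ηr) - (ηr - ηl) = -m := by rw [hmr]; ring
        rw [← e2]
        exact this
      · exact absurd hc2 hu2
      · have t2 : Tendsto (fun x : ℝ => η ((lam-u)*x)) atTop (𝓝 ηl) := tgen' _ (by linarith)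
        have t4 : Tendsto (fun x : ℝ => η ((1-u)*x)) atTop (𝓝 ηl) := tgen' _ (by linarith)
        have hind : (Ioo (1:ℝ) lam).indicator (fun _ => -m) u = 0 := by
          apply Set.indicator_of_notMem
          rw [mem_Ioo]; push_neg; intro h; linarith
        rw [hind]
        have := (t1.sub t2).sub (t3.sub t4)
        simpa using this

omit hc hmono hbrm htop hbot
include hlam

lemma Lfn_integral (hmr : ηr - ηl = m) :
    (∫ v in Ioi (0:ℝ), (-m * (min v lam - min v 1))/v^2) = -m * Real.log lam ∧
    IntegrableOn (fun v => (-m * (min v lam - min v 1))/v^2) (Ioi (0:ℝ)) volume := by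
  have hlam0 : (0:ℝ) < lam := by linarith
  set Lfn : ℝ → ℝ := fun v => (-m * (min v lam - min v 1))/v^2 with hLfn
  have hcont : ContinuousOn Lfn (Ioi (0:ℝ)) := by
    apply ContinuousOn.div
    · fun_prop
    · fun_prop
    · intro v hv; exact pow_ne_zero 2 (ne_of_gt (mem_Ioi.1 hv))
  -- piece 1
  have heq1 : EqOn Lfn (fun _ => (0:ℝ)) (Ioc (0:ℝ) 1) := by
    intro v hv
    simp only [hLfn]
    rw [min_eq_left (le_trans hv.2 hlam.le), min_eq_left hv.2]
    simp
  have hint1 : IntegrableOn Lfn (Ioc (0:ℝ) 1) volume :=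
    integrableOn_zero.congr_fun (fun v hv => (heq1 hv).symm) measurableSet_Ioc
  have hval1 : (∫ v in Ioc (0:ℝ) 1, Lfn v) = 0 := by
    rw [setIntegral_congr_fun measurableSet_Ioc heq1]
    simp
  -- piece 2
  have heq2 : EqOn Lfn (fun v => -m*(v-1)/v^2) (Ioc (1:ℝ) lam) := by
    intro v hv
    simp only [hLfn]
    rw [min_eq_left hv.2, min_eq_right hv.1.le]
  have hint2 : IntegrableOn Lfn (Ioc (1:ℝ) lam) volume := by
    apply IntegrableOn.mono_set _ Ioc_subset_Icc_self
    apply ContinuousOn.integrableOn_Icc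
    apply hcont.mono
    intro v hv
    exact mem_Ioi.2 (lt_of_lt_of_le one_pos hv.1)
  have hval2 : (∫ v in Ioc (1:ℝ) lam, Lfn v) = -m * Real.log lam - m*lam⁻¹ + m := by
    rw [setIntegral_congr_fun measurableSet_Ioc heq2,
      ← intervalIntegral.integral_of_le hlam.le]
    have hftc : ∀ v ∈ uIcc (1:ℝ) lam, HasDerivAt (fun v => -m*(Real.log v + v⁻¹))
        (-m*(v-1)/v^2) v := by
      intro v hv
      rw [uIcc_of_le hlam.le] at hv
      have hv0 : (0:ℝ) < v := lt_of_lt_of_le one_pos hv.1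
      have h1 := (Real.hasDerivAt_log hv0.ne').add (hasDerivAt_inv hv0.ne')
      have h2 := h1.const_mul (-m)
      refine h2.congr_deriv ?_
      field_simp
      ring
    rw [intervalIntegral.integral_eq_sub_of_hasDerivAt hftc]
    · simp [Real.log_one]
      ring
    · apply ContinuousOn.intervalIntegrable
      apply ContinuousOn.div
      · fun_prop
      · fun_prop
      · intro v hv
        rw [uIcc_of_le hlam.le] at hv
        have : (0:ℝ) < v := lt_of_lt_of_le one_pos hv.1
        exact pow_ne_zero 2 this.ne'
  -- piece 3
  have heq3 : EqOn Lfn (fun v => (-m*(lam-1))*(v^2)⁻¹) (Ioi lam) := by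
    intro v hv
    simp only [hLfn]
    rw [min_eq_right (mem_Ioi.1 hv).le, min_eq_right (by linarith [mem_Ioi.1 hv] : (1:ℝ) ≤ v)]
    rw [div_eq_mul_inv]
  have hint3 : IntegrableOn Lfn (Ioi lam) volume := by
    apply IntegrableOn.congr_fun _ (fun v hv => (heq3 hv).symm) measurableSet_Ioi
    exact (integrableOn_Ioi_inv_sq hlam0).const_mul _
  have hval3 : (∫ v in Ioi lam, Lfn v) = -m*(lam-1)*lam⁻¹ := by
    rw [setIntegral_congr_fun measurableSet_Ioi heq3]
    have hder : ∀ v ∈ Ioi lam, HasDerivAt (fun v => m*(lam-1)*v⁻¹) ((-m*(lam-1))*(v^2)⁻¹) v := by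
      intro v hv
      have hv0 : (0:ℝ) < v := lt_trans hlam0 (mem_Ioi.1 hv)
      have := (hasDerivAt_inv hv0.ne').const_mul (m*(lam-1))
      refine this.congr_deriv ?_
      ring
    have hlim : Tendsto (fun v => m*(lam-1)*v⁻¹) atTop (nhds 0) := by
      have := tendsto_inv_atTop_zero.const_mul (m*(lam-1))
      simpa using this
    rw [MeasureTheory.integral_Ioi_of_hasDerivAt_of_tendsto _ hder _ hlim]
    · ring
    · exact (continuousAt_const.mul (continuousAt_inv₀ hlam0.ne')).continuousWithinAt
    · apply IntegrableOn.congr_fun _ (fun v hv => rfl) measurableSet_Ioi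
      exact (integrableOn_Ioi_inv_sq hlam0).const_mul _
  -- combine
  have hu1 : Ioc (0:ℝ) 1 ∪ (Ioc 1 lam ∪ Ioi lam) = Ioi (0:ℝ) := by
    rw [Ioc_union_Ioi_eq_Ioi hlam.le, Ioc_union_Ioi_eq_Ioi (le_of_lt one_pos)]
  have hd1 : Disjoint (Ioc (0:ℝ) 1) (Ioc 1 lam ∪ Ioi lam) := by
    rw [Ioc_union_Ioi_eq_Ioi hlam.le]
    exact Ioc_disjoint_Ioi le_rfl
  have hd2 : Disjoint (Ioc (1:ℝ) lam) (Ioi lam) := Ioc_disjoint_Ioi le_rfl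
  have hint23 : IntegrableOn Lfn (Ioc 1 lam ∪ Ioi lam) volume := hint2.union hint3
  constructor
  · rw [← hu1, setIntegral_union hd1 (measurableSet_Ioc.union measurableSet_Ioi) hint1 hint23,
      setIntegral_union hd2 measurableSet_Ioi hint2 hint3, hval1, hval2, hval3]
    have hlne : lam ≠ 0 := hlam0.ne'
    field_simp
    ring
  · rw [← hu1]
    exact hint1.union hint23

omit hlam
include hc hlam hm0 hB0 hmono hbrm hsubp hsubn htop hbot

lemma T_lim (hmr : ηr - ηl = m) :
    Tendsto (fun x => ∫ y in Ioi (0:ℝ), (SPhi η (lam*x) y - SPhi η x y)/y^2) atTop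
      (nhds (-m * Real.log lam)) := by
  have hlam0 : (0:ℝ) < lam := by linarith
  have hPc : Continuous (Phi η) := Phi_cont hc
  set Gf : ℝ → ℝ → ℝ := fun x v => x * ((SPhi η (lam*x) (x*v) - SPhi η x (x*v))/(x*v)^2)
    with hGf
  set Lfn : ℝ → ℝ := fun v => (-m * (min v lam - min v 1))/v^2 with hLfn
  -- substitution identity
  have Tsub : ∀ x : ℝ, 0 < x →
      (∫ y in Ioi (0:ℝ), (SPhi η (lam*x) y - SPhi η x y)/y^2) = ∫ v in Ioi (0:ℝ), Gf x v := by
    intro x hx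
    have h := MeasureTheory.integral_comp_mul_left_Ioi
      (fun y => (SPhi η (lam*x) y - SPhi η x y)/y^2) 0 hx
    rw [mul_zero] at h
    have h2 : (∫ v in Ioi (0:ℝ), Gf x v)
        = x * ∫ v in Ioi (0:ℝ), (SPhi η (lam*x) (x*v) - SPhi η x (x*v))/(x*v)^2 :=
      MeasureTheory.integral_const_mul x _
    rw [h2, h, smul_eq_mul, ← mul_assoc, mul_inv_cancel₀ hx.ne', one_mul]
  -- G rewritten via h-function
  have Grw : ∀ x v : ℝ, 0 < x → 0 < v →
      Gf x v = (∫ u in (0:ℝ)..v, psiF η lam x (x*u))/v^2 := by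
    intro x v hx hv
    rw [← h_ident hc x v hx]
    simp only [hGf]
    field_simp
  -- pointwise limit
  have hptw : ∀ v : ℝ, 0 < v → Tendsto (fun x => Gf x v) atTop (nhds (Lfn v)) := by
    intro v hv
    have h1 := (h_lim hc hlam hmono hbrm htop hbot hmr v hv).div_const (v^2)
    apply h1.congr'
    filter_upwards [eventually_gt_atTop (0:ℝ)] with x hx
    rw [Grw x v hx hv]
  -- bounds on the h-function
  have hbd_a : ∀ x v : ℝ, 0 ≤ x → 0 < v → |∫ u in (0:ℝ)..v, psiF η lam x (x*u)| ≤ m*v := by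
    intro x v hx hv
    have := intervalIntegral.norm_integral_le_of_norm_le_const (a := (0:ℝ)) (b := v)
      (C := m) (f := fun u => psiF η lam x (x*u)) ?_
    · rw [Real.norm_eq_abs] at this
      calc |∫ u in (0:ℝ)..v, psiF η lam x (x*u)| ≤ m * |v - 0| := this
        _ = m*v := by rw [sub_zero, abs_of_pos hv]
    · intro u hu
      rw [uIoc_of_le hv.le] at hu
      rw [Real.norm_eq_abs]
      exact psi_abs_le_m hmono hbrm x (x*u) (mul_nonneg hx hu.1.le)
  have hbd_b : ∀ x v : ℝ, 2 ≤ x → 0 < v → v ≤ 1/2 →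
      |∫ u in (0:ℝ)..v, psiF η lam x (x*u)| ≤ 2*B*v^2 := by
    intro x v hx hv hv2
    have hx0 : (0:ℝ) < x := by linarith
    have h1 : ‖∫ u in (0:ℝ)..v, psiF η lam x (x*u)‖ ≤ |∫ u in (0:ℝ)..v, 4*B*u| := by
      apply intervalIntegral.norm_integral_le_abs_of_norm_le
      · rw [ae_restrict_iff' measurableSet_uIoc]
        apply Eventually.of_forall
        intro u hu
        rw [uIoc_of_le hv.le] at hu
        have hu0 : 0 < u := hu.1
        have hs := psi_small hlam hB0 hmono hsubp x (x*u) hx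
          (mul_nonneg hx0.le hu0.le) (by nlinarith [hu.2])
        rw [Real.norm_eq_abs]
        refine le_trans hs ?_
        rw [div_le_iff₀ (by positivity)]
        nlinarith [mul_nonneg (mul_nonneg (mul_nonneg hB0 hu0.le) hx0.le)
          (by linarith : (0:ℝ) ≤ x - 2)]
      · apply Continuous.intervalIntegrable; fun_prop
    have h2 : ∫ u in (0:ℝ)..v, 4*B*u = 2*B*v^2 := by
      rw [intervalIntegral.integral_const_mul, integral_id]; ring
    rw [h2] at h1
    rw [Real.norm_eq_abs] at h1
    calc |∫ u in (0:ℝ)..v, psiF η lam x (x*u)| ≤ |2*B*v^2| := h1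
      _ = 2*B*v^2 := abs_of_nonneg (by positivity)
  have hbd_c : ∀ x v : ℝ, 2 ≤ x → 2*lam < v →
      |∫ u in (0:ℝ)..v, psiF η lam x (x*u)| ≤ 2*lam*m + B*lam := by
    intro x v hx hv
    have hx0 : (0:ℝ) < x := by linarith
    have hsplit : (∫ u in (0:ℝ)..v, psiF η lam x (x*u))
        = (∫ u in (0:ℝ)..(2*lam), psiF η lam x (x*u)) + ∫ u in (2*lam)..v, psiF η lam x (x*u) := by
      symm
      apply intervalIntegral.integral_add_adjacent_intervals
      · apply Continuous.intervalIntegrable; unfold psiF; fun_prop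
      · apply Continuous.intervalIntegrable; unfold psiF; fun_prop
    have hp1 : |∫ u in (0:ℝ)..(2*lam), psiF η lam x (x*u)| ≤ m*(2*lam) :=
      hbd_a x (2*lam) hx0.le (by linarith)
    have hp2 : |∫ u in (2*lam)..v, psiF η lam x (x*u)| ≤ B*lam := by
      have h1 : ‖∫ u in (2*lam)..v, psiF η lam x (x*u)‖
          ≤ |∫ u in (2*lam)..v, 2*B*(lam-1)*(u^2)⁻¹| := by
        apply intervalIntegral.norm_integral_le_abs_of_norm_le
        · rw [ae_restrict_iff' measurableSet_uIoc]
          apply Eventually.of_forall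
          intro u hu
          rw [uIoc_of_le hv.le] at hu
          rw [Real.norm_eq_abs]
          exact psi_tail hlam hB0 hmono hsubp hsubn x u hx hu.1.le
        · apply ContinuousOn.intervalIntegrable
          apply ContinuousOn.mul continuousOn_const
          apply ContinuousOn.inv₀ (by fun_prop)
          intro u hu
          rw [uIcc_of_le hv.le] at hu
          have : (0:ℝ) < u := lt_of_lt_of_le (by positivity) hu.1
          positivity
      have h2 : ∫ u in (2*lam)..v, 2*B*(lam-1)*(u^2)⁻¹ = 2*B*(lam-1)*((2*lam)⁻¹ - v⁻¹) := by
        rw [intervalIntegral.integral_const_mul, integ_inv_sq]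
        rw [uIcc_of_le hv.le]
        intro hc0
        have := hc0.1
        linarith
      rw [h2] at h1
      rw [Real.norm_eq_abs] at h1
      have h3 : 2*B*(lam-1)*((2*lam)⁻¹ - v⁻¹) ≤ B*lam := by
        have i1 : (0:ℝ) < v := by linarith
        have i2 : v⁻¹ ≤ (2*lam)⁻¹ := by
          apply inv_anti₀ (by positivity) hv.le
        have i3 : (2*lam)⁻¹ - v⁻¹ ≤ (2*lam)⁻¹ := by
          have : (0:ℝ) ≤ v⁻¹ := by positivity
          linarith
        have i4 : 2*B*(lam-1)*((2*lam)⁻¹ - v⁻¹) ≤ 2*B*(lam-1)*(2*lam)⁻¹ := by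
          apply mul_le_mul_of_nonneg_left i3
          nlinarith
        refine le_trans i4 ?_
        have hl1 : (lam-1)*lam⁻¹ ≤ 1 := by
          rw [← div_eq_mul_inv, div_le_one hlam0]
          linarith
        calc 2*B*(lam-1)*(2*lam)⁻¹ = B*((lam-1)*lam⁻¹) := by
              rw [mul_inv]; ring
          _ ≤ B*1 := mul_le_mul_of_nonneg_left hl1 hB0
          _ ≤ B*lam := by nlinarith
      have h4 : (0:ℝ) ≤ 2*B*(lam-1)*((2*lam)⁻¹ - v⁻¹) := by
        have i1 : (0:ℝ) < v := by linarith
        have i2 : v⁻¹ ≤ (2*lam)⁻¹ := inv_anti₀ (by positivity) hv.le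
        have : (0:ℝ) ≤ (2*lam)⁻¹ - v⁻¹ := by linarith
        apply mul_nonneg _ this
        nlinarith
      rw [abs_of_nonneg h4] at h1
      linarith
    calc |∫ u in (0:ℝ)..v, psiF η lam x (x*u)|
        = |(∫ u in (0:ℝ)..(2*lam), psiF η lam x (x*u)) + ∫ u in (2*lam)..v, psiF η lam x (x*u)| := by
          rw [← hsplit]
      _ ≤ |∫ u in (0:ℝ)..(2*lam), psiF η lam x (x*u)| + |∫ u in (2*lam)..v, psiF η lam x (x*u)| :=
          abs_add_le _ _
      _ ≤ 2*lam*m + B*lam := by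
          have := hp1; have := hp2; linarith [hp1, hp2]
  -- apply DCT
  obtain ⟨hLval, hLint⟩ := Lfn_integral hlam hmr
  have hdct : Tendsto (fun x => ∫ v in Ioi (0:ℝ), Gf x v) atTop (nhds (∫ v in Ioi (0:ℝ), Lfn v)) := by
    apply MeasureTheory.tendsto_integral_filter_of_dominated_convergence
      (bound := fun v => if v ≤ 2*lam then (2*B+2*m) else (2*lam*m+B*lam)*(v^2)⁻¹)
    · filter_upwards [eventually_gt_atTop (0:ℝ)] with x hx
      apply ContinuousOn.aestronglyMeasurable _ measurableSet_Ioi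
      apply ContinuousOn.mul continuousOn_const
      apply ContinuousOn.div
      · apply Continuous.continuousOn
        unfold SPhi
        fun_prop
      · fun_prop
      · intro v hv
        have hv0 : 0 < v := mem_Ioi.1 hv
        positivity
    · filter_upwards [eventually_ge_atTop (2:ℝ)] with x hx
      rw [ae_restrict_iff' measurableSet_Ioi]
      apply Eventually.of_forall
      intro v hv
      have hv0 : 0 < v := mem_Ioi.1 hv
      have hx0 : (0:ℝ) < x := by linarith
      rw [Grw x v hx0 hv0, Real.norm_eq_abs, abs_div, abs_of_pos (by positivity : (0:ℝ) < v^2)]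
      rcases le_or_gt v (2*lam) with hcase | hcase
      · rw [if_pos hcase]
        rcases le_or_gt v (1/2) with hc2 | hc2
        · have := hbd_b x v hx hv0 hc2
          rw [div_le_iff₀ (by positivity)]
          nlinarith
        · have := hbd_a x v hx0.le hv0
          rw [div_le_iff₀ (by positivity)]
          nlinarith [mul_nonneg hm0 (mul_nonneg hv0.le (by linarith : (0:ℝ) ≤ 2*v - 1)),
            mul_nonneg hB0 (sq_nonneg v)]
      · rw [if_neg (not_le.2 hcase)]
        have := hbd_c x v hx hcase
        rw [div_le_iff₀ (by positivity)]
        have e : (2*lam*m+B*lam)*(v^2)⁻¹*v^2 = 2*lam*m+B*lam := by field_simp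
        rw [e]
        exact this
    · exact integrable_ite_Ioi (2*lam) (2*B+2*m) (2*lam*m+B*lam) (by positivity)
    · rw [ae_restrict_iff' measurableSet_Ioi]
      apply Eventually.of_forall
      intro v hv
      exact hptw v (mem_Ioi.1 hv)
  rw [← hLval]
  apply hdct.congr'
  filter_upwards [eventually_gt_atTop (0:ℝ)] with x hx
  exact (Tsub x hx).symm

end Part5



theorem main_plus
    (ηl ηr : ℝ) (hlr : ηl < ηr)
    (F : ℝ → ℝ) (hF : ContDiff ℝ 3 F)
    (hFr : deriv F ηr = 0) (hFr2 : 0 < deriv (deriv F) ηr)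
    (η : ℝ → ℝ) (c : ℝ)
    (hη : ContDiff ℝ 2 η)
    (hη' : ∀ x, 0 < deriv η x)
    (hbot : Tendsto η atBot (nhds ηl)) (htop : Tendsto η atTop (nhds ηr))
    (heq : ∀ x, -halfLap η x + c * deriv η x = deriv F (η x))
    (hdecay : ∃ A B : ℝ, 0 < A ∧ A < B ∧ ∀ x : ℝ, 1 ≤ |x| →
      A / |x| ^ 2 ≤ deriv η x ∧ deriv η x ≤ B / |x| ^ 2) :
    Tendsto (fun x => x * (η x - ηr)) atTop
      (nhds ((ηl - ηr) / (Real.pi * deriv (deriv F) ηr))) := by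
  obtain ⟨A, B, hA0, hAB, hABdec⟩ := hdecay
  have hB : ∀ x : ℝ, 1 ≤ |x| → deriv η x ≤ B / |x| ^ 2 := fun x hx => (hABdec x hx).2
  have hB0 : (0:ℝ) ≤ B := by linarith
  set m : ℝ := ηr - ηl with hmdef
  have hmr : ηr - ηl = m := rfl
  have hm0 : (0:ℝ) ≤ m := by rw [hmdef]; linarith
  set K : ℝ := deriv (deriv F) ηr with hKdef
  have hK0 : 0 < K := hFr2
  have hπ : (0:ℝ) < Real.pi := Real.pi_pos
  have hc : Continuous η := (hη.differentiable (by norm_num)).continuous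
  have hη'cont : Continuous (deriv η) := hη.continuous_deriv (by norm_num)
  have hsmono : StrictMono η := eta_mono hη hη'
  have hmono : Monotone η := hsmono.monotone
  have hftc := eta_ftc hη hη'
  have hlt : ∀ x, η x < ηr := eta_lt_top hη htop hη'
  have hgt : ∀ x, ηl < η x := eta_gt_bot hη hbot hη'
  have hsubp := eta_sub_le_pos hη hη' hB
  have hsubn := eta_sub_le_neg hη hη' hB
  have htail := eta_tail_top hη hη' htop hB
  obtain ⟨P, hPpos, hP⟩ := eta_deriv_glob_bound hη hη' hB
  have hbr0 : ∀ z s : ℝ, 0 ≤ s → 0 ≤ η (z+s) - η (z-s) := fun z s hs =>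
    sub_nonneg.2 (hmono (by linarith))
  have hbrm : ∀ z s : ℝ, η (z+s) - η (z-s) ≤ m := fun z s => by
    have := hlt (z+s); have := hgt (z-s); rw [hmdef]; linarith
  have hbrP : ∀ z s : ℝ, 0 ≤ s → η (z+s) - η (z-s) ≤ 2*P*s :=
    br_le_P hη hη' hP (eta_diff hη) hη'cont hsmono hftc hlt hgt
  have hχa : ∀ z s : ℝ, 0 ≤ z → 0 ≤ η (z+s) - η s ∧ η (z+s) - η s ≤ m := by
    intro z s hz
    constructor
    · exact sub_nonneg.2 (hmono (by linarith))
    · have := hlt (z+s); have := hgt s; rw [hmdef]; linarith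
  have hχb : ∀ z s : ℝ, 0 ≤ z → 0 ≤ η (z-s) - η (-s) ∧ η (z-s) - η (-s) ≤ m := by
    intro z s hz
    constructor
    · exact sub_nonneg.2 (hmono (by linarith))
    · have := hlt (z-s); have := hgt (-s); rw [hmdef]; linarith
  have hχc : ∀ z s : ℝ, 1 ≤ z → z + 1 ≤ s → η (z+s) - η s ≤ B*z*(s^2)⁻¹ := by
    intro z s hz hs
    have hs1 : (1:ℝ) ≤ s := by linarith
    have hs0 : (0:ℝ) < s := by linarith
    have hz0 : (0:ℝ) < z := by linarith
    have h1 := hsubp s (z+s) hs1 (by linarith)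
    refine le_trans h1 ?_
    have e : s⁻¹ - (z+s)⁻¹ = z/(s*(z+s)) := by
      field_simp
      ring
    rw [e, mul_assoc, ← div_eq_mul_inv (z) (s^2)]
    apply mul_le_mul_of_nonneg_left _ hB0
    rw [div_le_div_iff₀ (by positivity) (by positivity)]
    nlinarith [mul_nonneg (mul_nonneg hz0.le hz0.le) hs0.le]
  have hχd : ∀ z s : ℝ, 1 ≤ z → z + 1 ≤ s → η (z-s) - η (-s) ≤ B*z*((s-z)^2)⁻¹ := by
    intro z s hz hs
    have hz0 : (0:ℝ) < z := by linarith
    have hs0 : (0:ℝ) < s := by linarith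
    have hsz : (0:ℝ) < s - z := by linarith
    have h1 := hsubn (-s) (z-s) (by linarith) (by linarith)
    have e1 : -(z-s) = s - z := by ring
    have e2 : (-(-s) : ℝ) = s := by ring
    rw [e1, e2] at h1
    refine le_trans h1 ?_
    have e : (s-z)⁻¹ - s⁻¹ = z/((s-z)*s) := by
      field_simp
      ring
    rw [e, mul_assoc, ← div_eq_mul_inv (z) ((s-z)^2)]
    apply mul_le_mul_of_nonneg_left _ hB0
    rw [div_le_div_iff₀ (by positivity) (by positivity)]
    nlinarith [mul_nonneg (mul_nonneg hz0.le hz0.le) hsz.le]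
  have hquad := SPhi_abs_le_quad hc hPpos.le hbr0 hbrP
  have hdiff := SPhi_diff_le hc (by rw [hmdef]) hB0 hPpos.le hbr0 hbrm hbrP hχa hχb hχc hχd
  have hFint := Fz_integrable hc hPpos.le hm0 hB0 hquad hdiff
  set N : ℝ → ℝ := fun u => ∫ y in Ioi (0:ℝ), (SPhi η u y - SPhi η 0 y)/y^2 with hNdef
  have hNder : ∀ z : ℝ, 1 ≤ z →
      HasDerivAt N (Real.pi * (deriv F (η z) - c * deriv η z)) z := by
    intro z hz
    have h := (N_hasDerivAt hη hm0 hmono hbrm hFint z hz).2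
    have hval : (∫ y in Ioi (0:ℝ), Dq η z y / y^2)
        = Real.pi * (deriv F (η z) - c * deriv η z) := by
      have he := heq z
      have hhl : halfLap η z
          = -(1/Real.pi) * ∫ y in Ioi (0:ℝ), Dq η z y / y^2 := by
        unfold halfLap Dq
        rfl
      rw [hhl] at he
      have hpine : Real.pi ≠ 0 := hπ.ne'
      field_simp at he ⊢
      linarith
    rwa [hval] at h
  have hFcont : Continuous (deriv F) := hF.continuous_deriv (by norm_num)
  have hgcont : Continuous (fun t => Real.pi * (deriv F (η t) - c * deriv η t)) := by
    fun_prop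
  set Lc : ℝ := (ηl - ηr) / (Real.pi * K) with hLcdef
  have key : ∀ lam : ℝ, 1 < lam →
      Tendsto (fun x => ∫ t in x..(lam*x), (η t - ηr)) atTop (nhds (Lc * Real.log lam)) := by
    intro lam hlam
    have hlam0 : (0:ℝ) < lam := by linarith
    have hIdent : ∀ x : ℝ, 2 ≤ x →
        (∫ y in Ioi (0:ℝ), (SPhi η (lam*x) y - SPhi η x y)/y^2)
        = ∫ t in x..(lam*x), Real.pi * (deriv F (η t) - c * deriv η t) := by
      intro x hx
      have hx0 : (0:ℝ) < x := by linarith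
      have hxl : x ≤ lam*x := by nlinarith
      have h1 : (∫ t in x..(lam*x), Real.pi * (deriv F (η t) - c * deriv η t))
          = N (lam*x) - N x := by
        apply intervalIntegral.integral_eq_sub_of_hasDerivAt
        · intro t ht
          rw [uIcc_of_le hxl] at ht
          exact hNder t (by linarith [ht.1])
        · exact hgcont.intervalIntegrable _ _
      have h2 : N (lam*x) - N x
          = ∫ y in Ioi (0:ℝ), (SPhi η (lam*x) y - SPhi η x y)/y^2 := by
        rw [hNdef]
        simp only []
        rw [← MeasureTheory.integral_sub (hFint (lam*x) (by nlinarith)) (hFint x (by linarith))]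
        congr 1
        funext y
        ring
      rw [h1, h2]
    have hT := T_lim hc hlam hm0 hB0 hmono hbrm hsubp hsubn htop hbot hmr
    have L1 : Tendsto (fun x => ∫ t in x..(lam*x), Real.pi * (deriv F (η t) - c * deriv η t))
        atTop (nhds (-m * Real.log lam)) := by
      apply hT.congr'
      filter_upwards [eventually_ge_atTop (2:ℝ)] with x hx
      exact hIdent x hx
    have hsplitInt : ∀ x : ℝ,
        (∫ t in x..(lam*x), Real.pi * (deriv F (η t) - c * deriv η t))
        = Real.pi * (∫ t in x..(lam*x), deriv F (η t)) - Real.pi * c * (η (lam*x) - η x) := by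
      intro x
      have i1 : IntervalIntegrable (fun t => deriv F (η t)) volume x (lam*x) :=
        Continuous.intervalIntegrable (by fun_prop) _ _
      have i2 : IntervalIntegrable (fun t => c * deriv η t) volume x (lam*x) :=
        Continuous.intervalIntegrable (by fun_prop) _ _
      rw [intervalIntegral.integral_const_mul, intervalIntegral.integral_sub i1 i2,
        intervalIntegral.integral_const_mul, hftc]
      ring
    have hlamtop : Tendsto (fun x : ℝ => η (lam*x)) atTop (nhds ηr) :=
      htop.comp (Tendsto.const_mul_atTop hlam0 tendsto_id)
    have L2 : Tendsto (fun x => Real.pi * c * (η (lam*x) - η x)) atTop (nhds 0) := by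
      have := ((hlamtop.sub htop).const_mul (Real.pi * c))
      simpa using this
    have L3 : Tendsto (fun x => Real.pi * (∫ t in x..(lam*x), deriv F (η t)))
        atTop (nhds (-m * Real.log lam)) := by
      have h := L1.add L2
      rw [add_zero] at h
      apply h.congr
      intro x
      rw [hsplitInt x]
      ring
    have LA : Tendsto (fun x => ∫ t in x..(lam*x), deriv F (η t))
        atTop (nhds (Real.pi⁻¹ * (-m * Real.log lam))) := by
      have h := L3.const_mul (Real.pi⁻¹)
      apply h.congr
      intro x
      rw [← mul_assoc, inv_mul_cancel₀ hπ.ne', one_mul]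
    have hdF2 : ContDiff ℝ 2 (deriv F) := (contDiff_succ_iff_deriv.mp (by exact_mod_cast hF)).2.2
    have hdF1 : ContDiff ℝ 1 (deriv (deriv F)) :=
      (contDiff_succ_iff_deriv.mp (by exact_mod_cast hdF2)).2.2
    have hFppc : Continuous (deriv (deriv F)) := hdF1.continuous
    have hFpppc : Continuous (deriv (deriv (deriv F))) := hdF1.continuous_deriv le_rfl
    obtain ⟨C₃, hC₃⟩ := (isCompact_Icc (a := ηl) (b := ηr)).exists_bound_of_continuousOn
      hFpppc.continuousOn
    have hC₃0 : 0 ≤ C₃ := le_trans (norm_nonneg _) (hC₃ ηr ⟨hlr.le, le_rfl⟩)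
    have hKlip : ∀ w : ℝ, ηl ≤ w → w ≤ ηr → |deriv (deriv F) w - K| ≤ C₃*(ηr - w) := by
      intro w hw1 hw2
      have e : deriv (deriv F) w - K = -(∫ t in w..ηr, deriv (deriv (deriv F)) t) := by
        rw [intervalIntegral.integral_deriv_eq_sub
          (fun t _ => (hdF1.differentiable (by norm_num)).differentiableAt)
          (hFpppc.continuousOn.intervalIntegrable)]
        rw [hKdef]; ring
      rw [e, abs_neg]
      have h1 : ‖∫ t in w..ηr, deriv (deriv (deriv F)) t‖ ≤ C₃ * |ηr - w| := by
        apply intervalIntegral.norm_integral_le_of_norm_le_const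
        intro t ht
        rw [uIoc_of_le hw2] at ht
        exact hC₃ t (mem_Icc.2 ⟨by linarith [ht.1, hw1], ht.2⟩)
      rwa [Real.norm_eq_abs, abs_of_nonneg (show (0:ℝ) ≤ ηr - w by linarith)] at h1
    have hquadF : ∀ v : ℝ, ηl ≤ v → v ≤ ηr → |deriv F v - K*(v-ηr)| ≤ C₃*(ηr-v)^2 := by
      intro v hv1 hv2
      have e0 : deriv F v - K*(v-ηr) = -(∫ t in v..ηr, (deriv (deriv F) t - K)) := by
        rw [intervalIntegral.integral_sub
          ((hFppc.intervalIntegrable _ _))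
          (intervalIntegrable_const), intervalIntegral.integral_deriv_eq_sub
          (fun t _ => (hdF2.differentiable (by norm_num)).differentiableAt)
          (hFppc.continuousOn.intervalIntegrable), intervalIntegral.integral_const]
        rw [hFr]
        simp only [smul_eq_mul]
        ring
      rw [e0, abs_neg]
      have h1 : ‖∫ t in v..ηr, (deriv (deriv F) t - K)‖ ≤ (C₃*(ηr-v)) * |ηr - v| := by
        apply intervalIntegral.norm_integral_le_of_norm_le_const
        intro t ht
        rw [uIoc_of_le hv2] at ht
        have hl := hKlip t (by linarith [ht.1]) ht.2
        rw [Real.norm_eq_abs]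
        refine le_trans hl ?_
        have : ηr - t ≤ ηr - v := by linarith [ht.1]
        nlinarith
      rw [Real.norm_eq_abs, abs_of_nonneg (show (0:ℝ) ≤ ηr - v by linarith)] at h1
      calc |∫ t in v..ηr, (deriv (deriv F) t - K)| ≤ (C₃*(ηr-v))*(ηr-v) := h1
        _ = C₃*(ηr-v)^2 := by ring
    set Jf : ℝ → ℝ := fun x => ∫ t in x..(lam*x), (η t - ηr) with hJfdef
    have hJint : ∀ x : ℝ, IntervalIntegrable (fun t => η t - ηr) volume x (lam*x) :=
      fun x => (hc.sub continuous_const).intervalIntegrable _ _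
    have hJdiff : ∀ x : ℝ, 1 ≤ x →
        |(∫ t in x..(lam*x), deriv F (η t)) - K * Jf x| ≤ C₃*B^2*(lam-1)*x⁻¹ := by
      intro x hx
      have hx0 : (0:ℝ) < x := by linarith
      have hxl : x ≤ lam*x := by nlinarith
      have i1 : IntervalIntegrable (fun t => deriv F (η t)) volume x (lam*x) :=
        Continuous.intervalIntegrable (by fun_prop) _ _
      have e1 : (∫ t in x..(lam*x), deriv F (η t)) - K * Jf x
          = ∫ t in x..(lam*x), (deriv F (η t) - K*(η t - ηr)) := by
        simp only [hJfdef]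
        rw [intervalIntegral.integral_sub i1 ((hJint x).const_mul K),
          intervalIntegral.integral_const_mul]
      rw [e1]
      have h1 : ‖∫ t in x..(lam*x), (deriv F (η t) - K*(η t - ηr))‖
          ≤ (C₃*(B*x⁻¹)^2) * |lam*x - x| := by
        apply intervalIntegral.norm_integral_le_of_norm_le_const
        intro t ht
        rw [uIoc_of_le hxl] at ht
        have ht1 : x < t := ht.1
        have htx : (1:ℝ) ≤ t := by linarith
        have hq := hquadF (η t) (hgt t).le (hlt t).le
        rw [Real.norm_eq_abs]
        refine le_trans hq ?_
        have h2 : ηr - η t ≤ B * t⁻¹ := htail t htx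
        have h3 : B * t⁻¹ ≤ B * x⁻¹ :=
          mul_le_mul_of_nonneg_left (inv_anti₀ hx0 ht1.le) hB0
        have h4 : 0 ≤ ηr - η t := by linarith [hlt t]
        have h6 : (ηr - η t)^2 ≤ (B*x⁻¹)^2 := by nlinarith
        nlinarith
      rw [Real.norm_eq_abs] at h1
      refine le_trans h1 (le_of_eq ?_)
      rw [abs_of_nonneg (by linarith)]
      field_simp
    have htoz : Tendsto (fun x : ℝ => C₃*B^2*(lam-1)*x⁻¹) atTop (nhds 0) := by
      have := tendsto_inv_atTop_zero.const_mul (C₃*B^2*(lam-1))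
      simpa using this
    have L4 : Tendsto (fun x => (∫ t in x..(lam*x), deriv F (η t)) - K * Jf x)
        atTop (nhds 0) := by
      apply squeeze_zero_norm' _ htoz
      filter_upwards [eventually_ge_atTop (1:ℝ)] with x hx
      rw [Real.norm_eq_abs]
      exact hJdiff x hx
    have LJ : Tendsto (fun x => K * Jf x) atTop (nhds (Real.pi⁻¹ * (-m * Real.log lam))) := by
      have h := LA.sub L4
      rw [sub_zero] at h
      apply h.congr
      intro x
      ring
    have keyJ : Tendsto Jf atTop (nhds (K⁻¹ * (Real.pi⁻¹ * (-m * Real.log lam)))) := by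
      have h := LJ.const_mul K⁻¹
      apply h.congr
      intro x
      rw [← mul_assoc, inv_mul_cancel₀ hK0.ne', one_mul]
    have hconst : K⁻¹ * (Real.pi⁻¹ * (-m * Real.log lam)) = Lc * Real.log lam := by
      rw [hLcdef, hmdef, div_eq_mul_inv, mul_inv]
      ring
    rwa [hconst] at keyJ
  have hJlb : ∀ lam : ℝ, 1 < lam → ∀ x : ℝ, 0 < x →
      (lam-1)*x*(η x - ηr) ≤ ∫ t in x..(lam*x), (η t - ηr) := by
    intro lam hlam x hx0
    have hxl : x ≤ lam*x := by nlinarith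
    have h1 : (∫ t in x..(lam*x), (η x - ηr)) ≤ ∫ t in x..(lam*x), (η t - ηr) := by
      apply intervalIntegral.integral_mono_on hxl intervalIntegrable_const
        ((hc.sub continuous_const).intervalIntegrable _ _)
      intro t ht
      have := hmono ht.1
      show η x - ηr ≤ η t - ηr
      linarith
    rw [intervalIntegral.integral_const, smul_eq_mul] at h1
    calc (lam-1)*x*(η x - ηr) = (lam*x - x)*(η x - ηr) := by ring
      _ ≤ ∫ t in x..(lam*x), (η t - ηr) := h1
  have hJub : ∀ lam : ℝ, 1 < lam → ∀ x : ℝ, 0 < x →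
      (∫ t in x..(lam*x), (η t - ηr)) ≤ (lam-1)*x*(η (lam*x) - ηr) := by
    intro lam hlam x hx0
    have hxl : x ≤ lam*x := by nlinarith
    have h1 : (∫ t in x..(lam*x), (η t - ηr)) ≤ ∫ t in x..(lam*x), (η (lam*x) - ηr) := by
      apply intervalIntegral.integral_mono_on hxl
        ((hc.sub continuous_const).intervalIntegrable _ _) intervalIntegrable_const
      intro t ht
      have := hmono ht.2
      show η t - ηr ≤ η (lam*x) - ηr
      linarith
    rw [intervalIntegral.integral_const, smul_eq_mul] at h1
    calc (∫ t in x..(lam*x), (η t - ηr)) ≤ (lam*x - x)*(η (lam*x) - ηr) := h1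
      _ = (lam-1)*x*(η (lam*x) - ηr) := by ring
  rw [Metric.tendsto_nhds]
  intro ε hε
  have hslope : Tendsto (fun l : ℝ => Real.log l / (l-1)) (nhdsWithin 1 (Ioi 1)) (nhds 1) := by
    have h := hasDerivAt_iff_tendsto_slope.mp (Real.hasDerivAt_log one_ne_zero)
    have e : slope Real.log 1 = fun l => Real.log l / (l - 1) := by
      funext l; simp [slope_def_field, Real.log_one]
    rw [e] at h
    simp only [inv_one] at h
    exact h.mono_left (nhdsWithin_mono _ (fun l hl => ne_of_gt hl))
  have t_a : Tendsto (fun l : ℝ => Lc * (Real.log l / (l-1))) (nhdsWithin 1 (Ioi 1)) (nhds Lc) := by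
    have h := hslope.const_mul Lc
    simpa using h
  have t_b : Tendsto (fun l : ℝ => l * (Lc * (Real.log l / (l-1)))) (nhdsWithin 1 (Ioi 1)) (nhds Lc) := by
    have hid : Tendsto (fun l : ℝ => l) (nhdsWithin (1:ℝ) (Ioi 1)) (nhds 1) :=
      tendsto_id.mono_left nhdsWithin_le_nhds
    have h := hid.mul t_a
    simpa using h
  have ev1 : ∀ᶠ l in nhdsWithin (1:ℝ) (Ioi 1), |Lc * (Real.log l / (l-1)) - Lc| < ε/4 := by
    have h := Metric.tendsto_nhds.mp t_a (ε/4) (by positivity)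
    filter_upwards [h] with l hl
    rwa [Real.dist_eq] at hl
  have ev2 : ∀ᶠ l in nhdsWithin (1:ℝ) (Ioi 1), |l * (Lc * (Real.log l / (l-1))) - Lc| < ε/4 := by
    have h := Metric.tendsto_nhds.mp t_b (ε/4) (by positivity)
    filter_upwards [h] with l hl
    rwa [Real.dist_eq] at hl
  have ev3 : ∀ᶠ l in nhdsWithin (1:ℝ) (Ioi 1), l < 2 :=
    nhdsWithin_le_nhds (gt_mem_nhds (by norm_num))
  have ev4 : ∀ᶠ l in nhdsWithin (1:ℝ) (Ioi 1), 1 < l := self_mem_nhdsWithin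
  obtain ⟨lam, h1, h2, h3, h4⟩ := (ev1.and (ev2.and (ev3.and ev4))).exists
  have hlam : 1 < lam := h4
  have hd0 : (0:ℝ) < lam - 1 := by linarith
  have hlam0 : (0:ℝ) < lam := by linarith
  have ev5 := Metric.tendsto_nhds.mp (key lam hlam) ((lam-1)*ε/4) (by positivity)
  have htrans : Tendsto (fun y : ℝ => y/lam) atTop atTop := tendsto_id.atTop_div_const hlam0
  have ev6 := htrans.eventually ev5
  filter_upwards [ev5, ev6, eventually_ge_atTop (1:ℝ)] with x hx5 hx6 hx1
  have hx0 : (0:ℝ) < x := by linarith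
  rw [Real.dist_eq] at hx5 hx6 ⊢
  rw [abs_lt] at hx5 hx6 ⊢
  set b : ℝ := Lc * Real.log lam with hbdef
  have hb1 : Lc * (Real.log lam / (lam-1)) * (lam-1) = b := by
    rw [hbdef, mul_assoc, div_mul_cancel₀ _ (show lam - 1 ≠ 0 by linarith)]
  have hub2 : lam * (Lc * (Real.log lam / (lam-1))) * (lam-1) = lam * b := by
    rw [← hb1]; ring
  have habs1 := abs_lt.1 h1
  have habs2 := abs_lt.1 h2
  constructor
  · -- lower bound : -ε < x*(η x - ηr) - Lc
    have hub := hJub lam hlam (x/lam) (by positivity)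
    have e1 : lam * (x/lam) = x := by
      rw [mul_comm, div_mul_cancel₀ x (show lam ≠ 0 by linarith)]
    rw [e1] at hub
    have hJlow : b - (lam-1)*ε/4 < ∫ t in (x/lam)..x, (η t - ηr) := by
      have h := hx6.1
      have e2 : lam * (x/lam) = x := e1
      calc b - (lam-1)*ε/4 < ∫ t in (x/lam)..(lam*(x/lam)), (η t - ηr) := by linarith
        _ = ∫ t in (x/lam)..x, (η t - ηr) := by rw [e2]
    have h7 : b - (lam-1)*ε/4 < (lam-1)*(x/lam)*(η x - ηr) := by
      refine lt_of_lt_of_le hJlow ?_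
      calc (∫ t in (x/lam)..x, (η t - ηr))
          = ∫ t in (x/lam)..(lam*(x/lam)), (η t - ηr) := by rw [e1]
        _ ≤ (lam-1)*(x/lam)*(η (lam*(x/lam)) - ηr) := hJub lam hlam (x/lam) (by positivity)
        _ = (lam-1)*(x/lam)*(η x - ηr) := by rw [e1]
    have h8 : lam*(b - (lam-1)*ε/4) < lam*((lam-1)*(x/lam)*(η x - ηr)) :=
      (mul_lt_mul_iff_right₀ hlam0).2 h7
    have e3 : lam*((lam-1)*(x/lam)*(η x - ηr)) = (lam-1)*((lam*(x/lam))*(η x - ηr)) := by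
      ring
    rw [e3, e1] at h8
    have h9 : Lc - ε/4 < lam * (Lc * (Real.log lam / (lam-1))) := by linarith [habs2.1]
    have h10 : (Lc - ε/4)*(lam-1) < lam * b := by
      rw [← hub2]
      exact (mul_lt_mul_iff_left₀ hd0).2 h9
    have h12 : (lam-1)*(Lc - ε/4 - lam*ε/4) < (lam-1)*(x*(η x - ηr)) := by nlinarith
    have h13 : Lc - ε/4 - lam*ε/4 < x*(η x - ηr) := (mul_lt_mul_iff_right₀ hd0).1 h12
    have h14 : lam*ε/4 ≤ 2*ε/4 := by nlinarith
    linarith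
  · -- upper bound : x*(η x - ηr) - Lc < ε
    have hlb := hJlb lam hlam x hx0
    have hJhigh : (∫ t in x..(lam*x), (η t - ηr)) < b + (lam-1)*ε/4 := by
      linarith [hx5.2]
    have h7 : (lam-1)*(x*(η x - ηr)) < b + (lam-1)*ε/4 := by
      calc (lam-1)*(x*(η x - ηr)) = (lam-1)*x*(η x - ηr) := by ring
        _ ≤ ∫ t in x..(lam*x), (η t - ηr) := hlb
        _ < b + (lam-1)*ε/4 := hJhigh
    have h9 : Lc * (Real.log lam / (lam-1)) < Lc + ε/4 := by linarith [habs1.2]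
    have h10 : b < (Lc + ε/4)*(lam-1) := by
      rw [← hb1]
      exact (mul_lt_mul_iff_left₀ hd0).2 h9
    have h12 : (lam-1)*(x*(η x - ηr)) < (lam-1)*(Lc + ε/4 + ε/4) := by nlinarith
    have h13 : x*(η x - ηr) < Lc + ε/4 + ε/4 := (mul_lt_mul_iff_right₀ hd0).1 h12
    linarith


/-- Asymptotes of the Weertman profile (Proposition 1). -/
theorem weertman_asymptotes
    (ηl ηr : ℝ) (hlr : ηl < ηr)
    (F : ℝ → ℝ) (hF : ContDiff ℝ 3 F)
    (hFl : deriv F ηl = 0) (hFr : deriv F ηr = 0)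
    (hFl2 : 0 < deriv (deriv F) ηl) (hFr2 : 0 < deriv (deriv F) ηr)
    (η : ℝ → ℝ) (c : ℝ)
    (hη : ContDiff ℝ 2 η)
    (hη' : ∀ x, 0 < deriv η x)
    (hbot : Tendsto η atBot (nhds ηl)) (htop : Tendsto η atTop (nhds ηr))
    (heq : ∀ x, -halfLap η x + c * deriv η x = deriv F (η x))
    (hdecay : ∃ A B : ℝ, 0 < A ∧ A < B ∧ ∀ x : ℝ, 1 ≤ |x| →
      A / |x| ^ 2 ≤ deriv η x ∧ deriv η x ≤ B / |x| ^ 2) :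
    Tendsto (fun x => x * (η x - ηr)) atTop
      (nhds ((ηl - ηr) / (Real.pi * deriv (deriv F) ηr))) ∧
    Tendsto (fun x => x * (η x - ηl)) atBot
      (nhds ((ηl - ηr) / (Real.pi * deriv (deriv F) ηl))) := by
  constructor
  · exact main_plus ηl ηr hlr F hF hFr hFr2 η c hη hη' hbot htop heq hdecay
  · -- reflection
    set S : ℝ := ηl + ηr with hSdef
    set ζ : ℝ → ℝ := fun x => S - η (-x) with hζdef
    set G : ℝ → ℝ := fun v => F (S - v) with hGdef
    have hηd : ∀ x, DifferentiableAt ℝ η x := fun x =>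
      (hη.differentiable (by norm_num)).differentiableAt
    have hζd : ∀ x, HasDerivAt ζ (deriv η (-x)) x := by
      intro x
      have h1 : HasDerivAt (fun x : ℝ => η (-x)) (-(deriv η (-x))) x := by
        exact (((hηd (-x)).hasDerivAt).comp x (hasDerivAt_neg x)).congr_deriv (by ring)
      simpa using h1.const_sub S
    have hζd' : ∀ x, deriv ζ x = deriv η (-x) := fun x => (hζd x).deriv
    have hζC2 : ContDiff ℝ 2 ζ :=
      contDiff_const.sub (hη.comp contDiff_neg)
    have hζ' : ∀ x, 0 < deriv ζ x := by
      intro x; rw [hζd']; exact hη' (-x)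
    have hζtop : Tendsto ζ atTop (nhds ηr) := by
      have h1 : Tendsto (fun x : ℝ => η (-x)) atTop (nhds ηl) :=
        hbot.comp tendsto_neg_atTop_atBot
      have h2 := Tendsto.sub (tendsto_const_nhds (x := S)) h1
      have e : S - ηl = ηr := by rw [hSdef]; ring
      rwa [e] at h2
    have hζbot : Tendsto ζ atBot (nhds ηl) := by
      have h1 : Tendsto (fun x : ℝ => η (-x)) atBot (nhds ηr) :=
        htop.comp tendsto_neg_atBot_atTop
      have h2 := Tendsto.sub (tendsto_const_nhds (x := S)) h1
      have e : S - ηr = ηl := by rw [hSdef]; ring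
      rwa [e] at h2
    have hGC3 : ContDiff ℝ 3 G := hF.comp (contDiff_const.sub contDiff_id)
    have hFd : ∀ v, DifferentiableAt ℝ F v := fun v =>
      (hF.differentiable (by norm_num)).differentiableAt
    have hGd : ∀ v, HasDerivAt G (-(deriv F (S-v))) v := by
      intro v
      have h1 := ((hFd (S-v)).hasDerivAt).comp v ((hasDerivAt_id v).const_sub S)
      exact h1.congr_deriv (by ring)
    have hGd' : deriv G = fun v => -(deriv F (S-v)) := funext fun v => (hGd v).deriv
    have hdF2 : ContDiff ℝ 2 (deriv F) := (contDiff_succ_iff_deriv.mp (by exact_mod_cast hF)).2.2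
    have hG2d : ∀ v, HasDerivAt (deriv G) (deriv (deriv F) (S-v)) v := by
      intro v
      rw [hGd']
      have h1 := (((hdF2.differentiable (by norm_num)).differentiableAt
        (x := S-v)).hasDerivAt).comp v ((hasDerivAt_id v).const_sub S)
      have h2 := h1.neg
      exact h2.congr_deriv (by ring)
    have hG2d' : ∀ v, deriv (deriv G) v = deriv (deriv F) (S-v) := fun v => (hG2d v).deriv
    have hGr : deriv G ηr = 0 := by
      rw [hGd']
      have e : S - ηr = ηl := by rw [hSdef]; ring
      simp only [e, hFl, neg_zero]
    have hGr2 : 0 < deriv (deriv G) ηr := by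
      rw [hG2d']
      have e : S - ηr = ηl := by rw [hSdef]; ring
      rwa [e]
    have hhalf : ∀ x, halfLap ζ x = -halfLap η (-x) := by
      intro x
      unfold halfLap
      have e : (fun y => (ζ (x+y) - 2*ζ x + ζ (x-y))/y^2)
          = fun y => -((η (-x+y) - 2*η (-x) + η (-x-y))/y^2) := by
        funext y
        simp only [hζdef]
        have e1 : -(x+y) = -x - y := by ring
        have e2 : -(x-y) = -x + y := by ring
        rw [e1, e2]
        ring
      rw [e, MeasureTheory.integral_neg]
      ring
    have heqζ : ∀ x, -halfLap ζ x + (-c) * deriv ζ x = deriv G (ζ x) := by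
      intro x
      have h1 := heq (-x)
      rw [hhalf x, hζd']
      have e : S - ζ x = η (-x) := by simp only [hζdef]; ring
      rw [hGd']
      simp only [e]
      linarith
    have hdecayζ : ∃ A B : ℝ, 0 < A ∧ A < B ∧ ∀ x : ℝ, 1 ≤ |x| →
        A / |x| ^ 2 ≤ deriv ζ x ∧ deriv ζ x ≤ B / |x| ^ 2 := by
      obtain ⟨A, B, hA0, hAB, hbd⟩ := hdecay
      refine ⟨A, B, hA0, hAB, ?_⟩
      intro x hx
      rw [hζd']
      have hx' : 1 ≤ |(-x)| := by rwa [abs_neg]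
      have := hbd (-x) hx'
      rwa [abs_neg] at this
    have hmain := main_plus ηl ηr hlr G hGC3 hGr hGr2 ζ (-c) hζC2 hζ' hζbot hζtop heqζ hdecayζ
    have hconst : deriv (deriv G) ηr = deriv (deriv F) ηl := by
      rw [hG2d']
      have e : S - ηr = ηl := by rw [hSdef]; ring
      rw [e]
    rw [hconst] at hmain
    have hcomp := hmain.comp tendsto_neg_atBot_atTop
    apply hcomp.congr
    intro y
    simp only [Function.comp_apply, hζdef, neg_neg]
    ring
end

section
/- Let η_l < η_r and let F : ℝ → ℝ be of class C³ and bistable between η_l and η_r. Let (η, c) be a Weertman profile with velocity c for the potential F. Then the second derivative η'' is bounded on ℝ. -/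
open MeasureTheory Filter Set

private lemma aux_ftc (f : ℝ → ℝ) (hd : Differentiable ℝ f) (hc : Continuous (deriv f))
    (a b : ℝ) : ∫ u in a..b, deriv f u = f b - f a :=
  intervalIntegral.integral_deriv_eq_sub (fun t _ => hd t) (hc.intervalIntegrable a b)

/-- Second forward difference bound via a double FTC. -/
private lemma aux_d2 (f : ℝ → ℝ) (hd : Differentiable ℝ f) (hd2 : Differentiable ℝ (deriv f))
    (hc1 : Continuous (deriv f)) (hc2 : Continuous (deriv (deriv f)))
    (x h ℓ M : ℝ) (hh : 0 ≤ h)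
    (hM : ∀ t ∈ Icc x (x + 2*h), |deriv (deriv f) t - ℓ| ≤ M) :
    |f (x + 2*h) - 2 * f (x + h) + f x - ℓ * h^2| ≤ M * h^2 := by
  have c1 : Continuous (fun u => deriv f (u + h)) := hc1.comp (continuous_add_right h)
  have key : f (x + 2*h) - 2 * f (x + h) + f x - ℓ * h^2
      = ∫ u in x..(x+h), (deriv f (u + h) - deriv f u - ℓ * h) := by
    have e1 : ∫ u in x..(x+h), deriv f (u + h) = f (x + 2*h) - f (x + h) := by
      rw [intervalIntegral.integral_comp_add_right (fun u => deriv f u) h]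
      have e : x + h + h = x + 2*h := by ring
      rw [e, aux_ftc f hd hc1]
    have e2 : (∫ u in x..(x+h), (deriv f (u + h) - deriv f u - ℓ * h))
        = (∫ u in x..(x+h), (deriv f (u + h) - deriv f u)) - ∫ u in x..(x+h), (ℓ*h : ℝ) :=
      intervalIntegral.integral_sub ((c1.sub hc1).intervalIntegrable _ _)
        (intervalIntegrable_const)
    have e3 : (∫ u in x..(x+h), (deriv f (u + h) - deriv f u))
        = (∫ u in x..(x+h), deriv f (u + h)) - ∫ u in x..(x+h), deriv f u :=
      intervalIntegral.integral_sub (c1.intervalIntegrable _ _) (hc1.intervalIntegrable _ _)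
    rw [e2, e3, e1, aux_ftc f hd hc1, intervalIntegral.integral_const, smul_eq_mul]
    ring
  rw [key]
  have hb : ∀ u ∈ Set.uIoc x (x + h), ‖deriv f (u + h) - deriv f u - ℓ * h‖ ≤ M * h := by
    intro u hu
    rw [Set.uIoc_of_le (by linarith)] at hu
    have e4 : deriv f (u + h) - deriv f u - ℓ * h
        = ∫ t in u..(u+h), (deriv (deriv f) t - ℓ) := by
      have e5 : (∫ t in u..(u+h), (deriv (deriv f) t - ℓ))
          = (∫ t in u..(u+h), deriv (deriv f) t) - ∫ t in u..(u+h), (ℓ : ℝ) :=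
        intervalIntegral.integral_sub (hc2.intervalIntegrable _ _) (intervalIntegrable_const)
      rw [e5, aux_ftc (deriv f) hd2 hc2, intervalIntegral.integral_const, smul_eq_mul]
      ring
    rw [e4]
    have hbnd : ∀ t ∈ Set.uIoc u (u+h), ‖deriv (deriv f) t - ℓ‖ ≤ M := by
      intro t ht
      rw [Set.uIoc_of_le (by linarith)] at ht
      exact hM t ⟨by linarith [ht.1, hu.1], by linarith [ht.2, hu.2]⟩
    calc ‖∫ t in u..(u+h), (deriv (deriv f) t - ℓ)‖ ≤ M * |u + h - u| :=
          intervalIntegral.norm_integral_le_of_norm_le_const hbnd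
      _ = M * h := by rw [show u + h - u = h by ring, abs_of_nonneg hh]
  calc ‖∫ u in x..(x+h), (deriv f (u + h) - deriv f u - ℓ * h)‖
      ≤ (M * h) * |x + h - x| := intervalIntegral.norm_integral_le_of_norm_le_const hb
    _ = M * h^2 := by rw [show x + h - x = h by ring, abs_of_nonneg hh]; ring

private lemma exists_max_of_tendsto_zero {g : ℝ → ℝ} (hg : Continuous g)
    (ht : Tendsto g atTop (nhds 0)) (hb : Tendsto g atBot (nhds 0))
    {p : ℝ} (hp : 0 < g p) : ∃ x₀, ∀ x, g x ≤ g x₀ := by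
  obtain ⟨b, hb1⟩ := eventually_atTop.mp (ht.eventually (eventually_lt_nhds hp))
  obtain ⟨a, ha1⟩ := eventually_atBot.mp (hb.eventually (eventually_lt_nhds hp))
  have hmem : p ∈ Icc (min a p) (max b p) := ⟨min_le_right _ _, le_max_right _ _⟩
  obtain ⟨x₀, hx₀mem, hx₀⟩ := isCompact_Icc.exists_isMaxOn ⟨p, hmem⟩ hg.continuousOn
  refine ⟨x₀, fun x => ?_⟩
  by_cases hx : x ∈ Icc (min a p) (max b p)
  · exact hx₀ hx
  · have : g x < g p := by
      rcases not_and_or.mp hx with h1 | h2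
      · exact ha1 x (le_trans (le_of_lt (not_le.mp h1)) (min_le_left _ _))
      · exact hb1 x (le_trans (le_max_left _ _) (le_of_lt (not_le.mp h2)))
    exact le_trans this.le (hx₀ hmem)

private lemma aux_integrable (η : ℝ → ℝ) (hd : Differentiable ℝ η)
    (hd2 : Differentiable ℝ (deriv η)) (hc1 : Continuous (deriv η))
    (hc2 : Continuous (deriv (deriv η))) (C : ℝ) (hC : ∀ x, |η x| ≤ C) (w : ℝ) :
    IntegrableOn (fun y => (η (w + y) - 2 * η w + η (w - y)) / y ^ 2) (Ioi 0) volume := by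
  have hC0 : 0 ≤ C := le_trans (abs_nonneg _) (hC 0)
  set g : ℝ → ℝ := fun y => (η (w + y) - 2 * η w + η (w - y)) / y ^ 2 with hg
  have hη : Continuous η := hd.continuous
  have hnum : Continuous (fun y => η (w + y) - 2 * η w + η (w - y)) := by
    have a1 : Continuous (fun y : ℝ => η (w + y)) := hη.comp (continuous_const.add continuous_id)
    have a2 : Continuous (fun y : ℝ => η (w - y)) := hη.comp (continuous_const.sub continuous_id)
    exact (a1.sub continuous_const).add a2
  have hgc : ∀ s : Set ℝ, (∀ y ∈ s, y ≠ 0) → ContinuousOn g s := by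
    intro s hs
    exact hnum.continuousOn.div (continuous_pow 2).continuousOn
      (fun y hy => pow_ne_zero _ (hs y hy))
  obtain ⟨t₀, _, ht₀⟩ := isCompact_Icc.exists_isMaxOn (α := ℝ)
    ⟨w - 1, by constructor <;> linarith⟩
    ((hc2.abs).continuousOn : ContinuousOn (fun t => |deriv (deriv η) t|) (Icc (w-1) (w+1)))
  set Mw : ℝ := |deriv (deriv η) t₀| with hMw
  have p1 : IntegrableOn g (Ioc 0 1) volume := by
    apply Measure.integrableOn_of_bounded (M := Mw) measure_Ioc_lt_top.ne
    · exact (hnum.measurable.div ((continuous_pow 2).measurable)).aestronglyMeasurable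
    · refine (ae_restrict_iff' measurableSet_Ioc).mpr (ae_of_all _ fun y hy => ?_)
      have hy0 : 0 < y := hy.1
      have hy1 : y ≤ 1 := hy.2
      have hM' : ∀ t ∈ Icc (w - y) (w - y + 2*y), |deriv (deriv η) t - 0| ≤ Mw := by
        intro t ht
        rw [sub_zero]
        exact ht₀ ⟨by linarith [ht.1], by linarith [ht.2]⟩
      have B2 := aux_d2 η hd hd2 hc1 hc2 (w - y) y 0 Mw hy0.le hM'
      rw [show w - y + 2*y = w + y by ring, show w - y + y = w by ring] at B2
      rw [zero_mul, sub_zero] at B2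
      have hgy : ‖g y‖ = |η (w + y) - 2 * η w + η (w - y)| / y ^ 2 := by
        rw [hg]; simp only [Real.norm_eq_abs, abs_div, abs_pow, abs_of_pos hy0]
      rw [hgy, div_le_iff₀ (by positivity)]
      linarith [B2]
  have p2 : IntegrableOn g (Ioi 1) volume := by
    have base : IntegrableOn (fun t : ℝ => t ^ (-2 : ℝ)) (Ioi 1) volume :=
      integrableOn_Ioi_rpow_of_lt (by norm_num) one_pos
    have base2 : IntegrableOn (fun t : ℝ => 4*C * t ^ (-2 : ℝ)) (Ioi 1) volume :=
      base.const_mul _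
    refine Integrable.mono base2
      ((hgc (Ioi 1) (fun y hy => ne_of_gt (lt_trans one_pos hy))).aestronglyMeasurable
        measurableSet_Ioi) ?_
    refine (ae_restrict_iff' measurableSet_Ioi).mpr (ae_of_all _ fun y hy => ?_)
    have hy1 : (1:ℝ) < y := hy
    have hy0 : (0:ℝ) < y := by linarith
    have hr : y ^ (-2:ℝ) = (y ^ 2)⁻¹ := by
      rw [Real.rpow_neg hy0.le, show ((2:ℝ) = ((2:ℕ):ℝ)) by norm_num, Real.rpow_natCast]
    have hnb : |η (w + y) - 2 * η w + η (w - y)| ≤ 4 * C := by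
      have a1 := abs_le.mp (hC (w + y))
      have a2 := abs_le.mp (hC w)
      have a3 := abs_le.mp (hC (w - y))
      rw [abs_le]
      constructor <;> linarith [a1.1, a1.2, a2.1, a2.2, a3.1, a3.2]
    show ‖g y‖ ≤ ‖4 * C * y ^ (-2:ℝ)‖
    rw [hg, Real.norm_eq_abs, Real.norm_eq_abs, abs_div, abs_pow, abs_of_pos hy0, hr,
      abs_mul, abs_of_nonneg (by linarith : (0:ℝ) ≤ 4*C),
      abs_of_nonneg (by positivity : (0:ℝ) ≤ (y^2)⁻¹), div_eq_mul_inv]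
    exact mul_le_mul_of_nonneg_right hnb (by positivity)
  have huni : Ioc (0:ℝ) 1 ∪ Ioi 1 = Ioi 0 := Ioc_union_Ioi_eq_Ioi zero_le_one
  rw [← huni]
  exact p1.union p2

set_option maxHeartbeats 2000000 in
/-- The second derivative of a Weertman profile is bounded on ℝ (Lemma 1). -/
theorem weertman_second_deriv_bounded
    (ηl ηr : ℝ) (hlr : ηl < ηr)
    (F : ℝ → ℝ) (hF : ContDiff ℝ 3 F)
    (hFl : deriv F ηl = 0) (hFr : deriv F ηr = 0)
    (hFl2 : 0 < deriv (deriv F) ηl) (hFr2 : 0 < deriv (deriv F) ηr)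
    (η : ℝ → ℝ) (c : ℝ)
    (hη : ContDiff ℝ 2 η)
    (hη' : ∀ x, 0 < deriv η x)
    (hbot : Tendsto η atBot (nhds ηl)) (htop : Tendsto η atTop (nhds ηr))
    (heq : ∀ x, -halfLap η x + c * deriv η x = deriv F (η x))
    (hdecay : ∃ A B : ℝ, 0 < A ∧ A < B ∧ ∀ x : ℝ, 1 ≤ |x| →
      A / |x| ^ 2 ≤ deriv η x ∧ deriv η x ≤ B / |x| ^ 2) :
    ∃ M : ℝ, ∀ x, |deriv (deriv η) x| ≤ M := by
  obtain ⟨A, B, hA, hAB, hdec⟩ := hdecay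
  -- smoothness of η
  have h21 : (2 : WithTop ℕ∞) = 1 + 1 := by norm_num
  rw [h21] at hη
  have hd1 : Differentiable ℝ η := (contDiff_succ_iff_deriv.mp hη).1
  have hder : ContDiff ℝ 1 (deriv η) := (contDiff_succ_iff_deriv.mp hη).2.2
  have hd2 : Differentiable ℝ (deriv η) := (contDiff_one_iff_deriv.mp hder).1
  have hc1 : Continuous (deriv η) := hd2.continuous
  have hc2 : Continuous (deriv (deriv η)) := (contDiff_one_iff_deriv.mp hder).2
  -- smoothness of F
  have h32 : (3 : WithTop ℕ∞) = 2 + 1 := by norm_num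
  rw [h32] at hF
  have hF2 : ContDiff ℝ 2 (deriv F) := (contDiff_succ_iff_deriv.mp hF).2.2
  rw [h21] at hF2
  have hFd2 : Differentiable ℝ (deriv F) := (contDiff_succ_iff_deriv.mp hF2).1
  have hF3 : ContDiff ℝ 1 (deriv (deriv F)) := (contDiff_succ_iff_deriv.mp hF2).2.2
  have hFd3 : Differentiable ℝ (deriv (deriv F)) := (contDiff_one_iff_deriv.mp hF3).1
  have hFc2 : Continuous (deriv (deriv F)) := hFd3.continuous
  have hFc3 : Continuous (deriv (deriv (deriv F))) := (contDiff_one_iff_deriv.mp hF3).2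
  -- monotonicity and range
  have hmono : StrictMono η := strictMono_of_deriv_pos hη'
  have hrange : ∀ x, ηl < η x ∧ η x < ηr := by
    intro x
    constructor
    · have hle : ηl ≤ η (x - 1) :=
        le_of_tendsto hbot (eventually_atBot.mpr
          ⟨x - 1, fun z hz => hmono.le_iff_le.mpr hz⟩)
      exact lt_of_le_of_lt hle (hmono (by linarith : x - 1 < x))
    · have hge : η (x + 1) ≤ ηr :=
        ge_of_tendsto htop (eventually_atTop.mpr
          ⟨x + 1, fun z hz => hmono.le_iff_le.mpr hz⟩)
      exact lt_of_lt_of_le (hmono (by linarith : x < x + 1)) hge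
  have hbound : ∀ x, |η x| ≤ max |ηl| |ηr| := by
    intro x
    have h1 := (hrange x).1
    have h2 := (hrange x).2
    have h3 : -(max |ηl| |ηr|) ≤ ηl := by
      have := neg_abs_le ηl
      have := le_max_left |ηl| |ηr|
      linarith
    have h4 : ηr ≤ max |ηl| |ηr| := le_trans (le_abs_self ηr) (le_max_right _ _)
    rw [abs_le]; constructor <;> linarith
  -- global bound K on deriv η
  obtain ⟨t₁, _, ht₁⟩ := isCompact_Icc.exists_isMaxOn (α := ℝ) (s := Icc (-1:ℝ) 1)
    ⟨0, by norm_num⟩ hc1.continuousOn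
  set K : ℝ := max (deriv η t₁) B with hKdef
  have hK : ∀ x, deriv η x ≤ K := by
    intro x
    by_cases h1 : |x| ≤ 1
    · have hx : x ∈ Icc (-1:ℝ) 1 := by
        have := abs_le.mp h1; exact ⟨this.1, this.2⟩
      exact le_trans (ht₁ hx) (le_max_left _ _)
    · have hx := (hdec x (le_of_lt (not_le.mp h1))).2
      have hx2 : (1:ℝ) ≤ |x|^2 := by nlinarith [le_of_lt (not_le.mp h1)]
      have : B / |x|^2 ≤ B := div_le_self (by linarith) hx2
      exact le_trans hx (le_trans this (le_max_right _ _))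
  have hK0 : 0 < K := lt_of_lt_of_le (hη' t₁) (le_max_left _ _)
  -- increments of η
  have hincr : ∀ a b : ℝ, a ≤ b → η b - η a ≤ K * (b - a) := by
    intro a b hab
    have hb : ∀ u ∈ Set.uIoc a b, ‖deriv η u‖ ≤ K := by
      intro u _
      rw [Real.norm_eq_abs, abs_of_pos (hη' u)]
      exact hK u
    calc η b - η a ≤ |η b - η a| := le_abs_self _
      _ = ‖∫ u in a..b, deriv η u‖ := by rw [aux_ftc η hd1 hc1, Real.norm_eq_abs]
      _ ≤ K * |b - a| := intervalIntegral.norm_integral_le_of_norm_le_const hb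
      _ = K * (b - a) := by rw [abs_of_nonneg (by linarith)]
  have hmono' : ∀ a b : ℝ, a ≤ b → 0 ≤ η b - η a := by
    intro a b hab
    rcases eq_or_lt_of_le hab with rfl | h
    · simp
    · linarith [le_of_lt (hmono h)]
  -- Lipschitz bound for F'' on [ηl, ηr]
  obtain ⟨s₁, _, hs₁⟩ := isCompact_Icc.exists_isMaxOn (α := ℝ) (s := Icc ηl ηr)
    ⟨ηl, left_mem_Icc.mpr hlr.le⟩ (hFc3.abs).continuousOn
  set L : ℝ := |deriv (deriv (deriv F)) s₁| with hLdef
  have hL0 : 0 ≤ L := abs_nonneg _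
  have hLip : ∀ a b : ℝ, a ∈ Icc ηl ηr → b ∈ Icc ηl ηr → a < b →
      |deriv (deriv F) a - deriv (deriv F) b| ≤ L * (b - a) := by
    intro a b ha hb hab
    obtain ⟨θ, hθ, heqθ⟩ := exists_hasDerivAt_eq_slope (deriv (deriv F))
      (deriv (deriv (deriv F))) hab hFc2.continuousOn (fun v _ => (hFd3 v).hasDerivAt)
    have hne : b - a ≠ 0 := ne_of_gt (by linarith)
    have heq2 : deriv (deriv F) b - deriv (deriv F) a
        = deriv (deriv (deriv F)) θ * (b - a) := by
      rw [heqθ]; field_simp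
    have hθmem : θ ∈ Icc ηl ηr := ⟨le_trans ha.1 hθ.1.le, le_trans hθ.2.le hb.2⟩
    have hFθ : |deriv (deriv (deriv F)) θ| ≤ L := hs₁ hθmem
    calc |deriv (deriv F) a - deriv (deriv F) b|
        = |deriv (deriv (deriv F)) θ * (b - a)| := by rw [abs_sub_comm, heq2]
      _ = |deriv (deriv (deriv F)) θ| * (b - a) := by
          rw [abs_mul, abs_of_pos (by linarith : (0:ℝ) < b - a)]
      _ ≤ L * (b - a) := mul_le_mul_of_nonneg_right hFθ (by linarith)
  -- MVT for increments of F' ∘ η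
  have hMVT : ∀ a b : ℝ, a < b → ∃ θ, η a < θ ∧ θ < η b ∧
      deriv F (η b) - deriv F (η a) = deriv (deriv F) θ * (η b - η a) := by
    intro a b hab
    have hab' : η a < η b := hmono hab
    obtain ⟨θ, hθ, heqθ⟩ := exists_hasDerivAt_eq_slope (deriv F) (deriv (deriv F)) hab'
      hFd2.continuous.continuousOn (fun v _ => (hFd2 v).hasDerivAt)
    refine ⟨θ, hθ.1, hθ.2, ?_⟩
    have hne : η b - η a ≠ 0 := ne_of_gt (sub_pos.mpr hab')
    rw [heqθ]
    field_simp
  -- positivity of F'' near the wells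
  obtain ⟨ρr, hρr, hball_r⟩ : ∃ ρ > 0, ∀ v, |v - ηr| ≤ ρ →
      deriv (deriv F) ηr / 2 ≤ deriv (deriv F) v := by
    have hev := (hFc2.continuousAt (x := ηr)).eventually
      (eventually_gt_nhds (half_lt_self hFr2))
    obtain ⟨ε, hε, hball⟩ := Metric.eventually_nhds_iff.mp hev
    exact ⟨ε/2, half_pos hε, fun v hv => le_of_lt (hball
      (show dist v ηr < ε by rw [Real.dist_eq]; linarith [hv]))⟩
  obtain ⟨ρl, hρl, hball_l⟩ : ∃ ρ > 0, ∀ v, |v - ηl| ≤ ρ →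
      deriv (deriv F) ηl / 2 ≤ deriv (deriv F) v := by
    have hev := (hFc2.continuousAt (x := ηl)).eventually
      (eventually_gt_nhds (half_lt_self hFl2))
    obtain ⟨ε, hε, hball⟩ := Metric.eventually_nhds_iff.mp hev
    exact ⟨ε/2, half_pos hε, fun v hv => le_of_lt (hball
      (show dist v ηl < ε by rw [Real.dist_eq]; linarith [hv]))⟩
  set lam : ℝ := min (deriv (deriv F) ηl / 2) (deriv (deriv F) ηr / 2) with hlamdef
  have hlam : 0 < lam := lt_min (half_pos hFl2) (half_pos hFr2)
  -- thresholds
  obtain ⟨R₁, hR₁⟩ := eventually_atTop.mp (htop.eventually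
    (eventually_gt_nhds (show ηr - ρr < ηr by linarith)))
  obtain ⟨R₂₀, hR₂₀⟩ := eventually_atBot.mp (hbot.eventually
    (eventually_lt_nhds (show ηl < ηl + ρl by linarith)))
  set R₂ : ℝ := min R₂₀ R₁ with hR₂def
  have hR₂ : ∀ x ≤ R₂, η x < ηl + ρl := fun x hx =>
    hR₂₀ x (le_trans hx (min_le_left _ _))
  have hR₂R₁ : R₂ ≤ R₁ := min_le_right _ _
  -- compact bound for the middle region
  obtain ⟨t₂, _, ht₂⟩ := isCompact_Icc.exists_isMaxOn (α := ℝ) (s := Icc (R₂ - 2) (R₁ + 2))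
    ⟨R₂ - 2, by constructor <;> linarith⟩ (hc2.abs).continuousOn
  set C₀ : ℝ := |deriv (deriv η) t₂| with hC₀def
  have hC₀ : 0 ≤ C₀ := abs_nonneg _
  set Mbar : ℝ := max C₀ (2 * L * K^2 / lam) with hMbardef
  have hMbar0 : 0 ≤ Mbar := le_trans hC₀ (le_max_left _ _)
  -- integrability of the halfLap integrand
  have hInt : ∀ w : ℝ, IntegrableOn
      (fun y => (η (w + y) - 2*η w + η (w - y))/y^2) (Ioi 0) volume :=
    aux_integrable η hd1 hd2 hc1 hc2 _ hbound
  -- rearranged equation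
  have heq' : ∀ w : ℝ, halfLap η w = c * deriv η w - deriv F (η w) := by
    intro w; linarith [heq w]
  -- MAIN CLAIM: uniform bound on forward second difference quotients
  have main : ∀ h : ℝ, 0 < h → h ≤ 1 → ∀ x,
      |(η (x + 2*h) - 2*η (x + h) + η x)/h^2| ≤ Mbar := by
    intro h hh0 hh1
    have h2pos : (0:ℝ) < h^2 := pow_pos hh0 2
    set z : ℝ → ℝ := fun x => (η (x + 2*h) - 2*η (x + h) + η x)/h^2 with hz
    -- continuity
    have ha1 : Continuous (fun x => η (x + 2*h)) := hd1.continuous.comp (continuous_add_right _)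
    have ha2 : Continuous (fun x => η (x + h)) := hd1.continuous.comp (continuous_add_right _)
    have hzc : Continuous z :=
      ((ha1.sub (continuous_const.mul ha2)).add hd1.continuous).div_const _
    -- limits at infinity
    have hzar : Tendsto z atTop (nhds 0) := by
      have l1 : Tendsto (fun x => η (x + 2*h)) atTop (nhds ηr) :=
        htop.comp (tendsto_atTop_add_const_right _ _ tendsto_id)
      have l2 : Tendsto (fun x => η (x + h)) atTop (nhds ηr) :=
        htop.comp (tendsto_atTop_add_const_right _ _ tendsto_id)
      have l4 : Tendsto z atTop (nhds ((ηr - 2*ηr + ηr)/h^2)) :=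
        ((l1.sub (l2.const_mul 2)).add htop).div_const _
      rw [show (ηr - 2*ηr + ηr)/h^2 = 0 by ring] at l4
      exact l4
    have hzab : Tendsto z atBot (nhds 0) := by
      have l1 : Tendsto (fun x => η (x + 2*h)) atBot (nhds ηl) :=
        hbot.comp (tendsto_atBot_add_const_right _ _ tendsto_id)
      have l2 : Tendsto (fun x => η (x + h)) atBot (nhds ηl) :=
        hbot.comp (tendsto_atBot_add_const_right _ _ tendsto_id)
      have l4 : Tendsto z atBot (nhds ((ηl - 2*ηl + ηl)/h^2)) :=
        ((l1.sub (l2.const_mul 2)).add hbot).div_const _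
      rw [show (ηl - 2*ηl + ηl)/h^2 = 0 by ring] at l4
      exact l4
    -- derivative of z
    have hzd : ∀ x, HasDerivAt z
        ((deriv η (x + 2*h) - 2*deriv η (x + h) + deriv η x)/h^2) x := by
      intro x
      have d1 : HasDerivAt (fun x => η (x + 2*h)) (deriv η (x + 2*h)) x := by
        have := ((hd1 (x + 2*h)).hasDerivAt).comp x ((hasDerivAt_id x).add_const (2*h))
        simpa [Function.comp_def] using this
      have d2 : HasDerivAt (fun x => η (x + h)) (deriv η (x + h)) x := by
        have := ((hd1 (x + h)).hasDerivAt).comp x ((hasDerivAt_id x).add_const h)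
        simpa [Function.comp_def] using this
      exact ((d1.sub (d2.const_mul 2)).add (hd1 x).hasDerivAt).div_const _
    -- additivity of halfLap over the second difference
    have hadd : ∀ x, halfLap z x =
        (halfLap η (x + 2*h) - 2*halfLap η (x + h) + halfLap η x)/h^2 := by
      intro x
      simp only [halfLap, hz]
      have step1 : (fun y => ((η (x + y + 2*h) - 2*η (x + y + h) + η (x + y))/h^2
            - 2*((η (x + 2*h) - 2*η (x + h) + η x)/h^2)
            + (η (x - y + 2*h) - 2*η (x - y + h) + η (x - y))/h^2)/y^2)
          = fun y => ((η (x + 2*h + y) - 2*η (x + 2*h) + η (x + 2*h - y))/y^2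
            - 2*((η (x + h + y) - 2*η (x + h) + η (x + h - y))/y^2)
            + (η (x + y) - 2*η x + η (x - y))/y^2)/h^2 := by
        funext y; ring_nf
      rw [step1]
      rw [MeasureTheory.integral_div]
      have step2 : (∫ y in Ioi (0:ℝ),
          ((η (x + 2*h + y) - 2*η (x + 2*h) + η (x + 2*h - y))/y^2
            - 2*((η (x + h + y) - 2*η (x + h) + η (x + h - y))/y^2)
            + (η (x + y) - 2*η x + η (x - y))/y^2))
          = (∫ y in Ioi (0:ℝ), (η (x + 2*h + y) - 2*η (x + 2*h) + η (x + 2*h - y))/y^2)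
            - 2*(∫ y in Ioi (0:ℝ), (η (x + h + y) - 2*η (x + h) + η (x + h - y))/y^2)
            + ∫ y in Ioi (0:ℝ), (η (x + y) - 2*η x + η (x - y))/y^2 := by
        rw [MeasureTheory.integral_add
            (f := fun y => (η (x + 2*h + y) - 2*η (x + 2*h) + η (x + 2*h - y))/y^2
              - 2*((η (x + h + y) - 2*η (x + h) + η (x + h - y))/y^2))
            (g := fun y => (η (x + y) - 2*η x + η (x - y))/y^2)
            (by exact (hInt (x + 2*h)).sub ((hInt (x + h)).const_mul 2)) (hInt x),
          MeasureTheory.integral_sub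
            (f := fun y => (η (x + 2*h + y) - 2*η (x + 2*h) + η (x + 2*h - y))/y^2)
            (g := fun y => 2*((η (x + h + y) - 2*η (x + h) + η (x + h - y))/y^2))
            (hInt (x + 2*h)) (by exact (hInt (x + h)).const_mul 2),
          MeasureTheory.integral_const_mul]
      rw [step2]
      ring
    -- middle region bound
    have hmiddle : ∀ x₀ : ℝ, R₂ - 2 ≤ x₀ → x₀ ≤ R₁ → |z x₀| ≤ C₀ := by
      intro x₀ hm1 hm2
      have hM' : ∀ t ∈ Icc x₀ (x₀ + 2*h), |deriv (deriv η) t - 0| ≤ C₀ := by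
        intro t ht
        rw [sub_zero]
        exact ht₂ ⟨by linarith [ht.1], by linarith [ht.2, hh1]⟩
      have hb2 := aux_d2 η hd1 hd2 hc1 hc2 x₀ h 0 C₀ hh0.le hM'
      rw [zero_mul, sub_zero] at hb2
      simp only [hz]
      rw [abs_div, abs_of_pos h2pos, div_le_iff₀ h2pos]
      linarith [hb2]
    -- equation at a global max point
    have hGmax : ∀ x₀ : ℝ, (∀ x, z x ≤ z x₀) →
        deriv F (η (x₀ + 2*h)) - 2*deriv F (η (x₀ + h)) + deriv F (η x₀) ≤ 0 := by
      intro x₀ hx₀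
      have hmax : IsLocalMax z x₀ := Filter.Eventually.of_forall hx₀
      have hd0 : deriv z x₀ = 0 := hmax.deriv_eq_zero
      have hφ0 : deriv η (x₀ + 2*h) - 2*deriv η (x₀ + h) + deriv η x₀ = 0 := by
        have hzder := (hzd x₀).deriv
        rw [hd0] at hzder
        rcases div_eq_zero_iff.mp hzder.symm with h' | h'
        · exact h'
        · exact absurd h' (ne_of_gt h2pos)
      have hlap : 0 ≤ halfLap z x₀ := by
        have hint : (∫ y in Ioi (0:ℝ), (z (x₀ + y) - 2*z x₀ + z (x₀ - y))/y^2) ≤ 0 := by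
          apply setIntegral_nonpos measurableSet_Ioi
          intro y _
          have h1 := hx₀ (x₀ + y)
          have h2 := hx₀ (x₀ - y)
          exact div_nonpos_of_nonpos_of_nonneg (by linarith) (by positivity)
        have hrfl : halfLap z x₀
            = -(1/Real.pi) * ∫ y in Ioi (0:ℝ), (z (x₀ + y) - 2*z x₀ + z (x₀ - y))/y^2 := rfl
        rw [hrfl]
        have hπ : 0 < (1/Real.pi) := by positivity
        exact mul_nonneg_of_nonpos_of_nonpos (by linarith) hint
      have e2 : halfLap z x₀ = (c*(deriv η (x₀ + 2*h)) - deriv F (η (x₀ + 2*h))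
          - 2*(c*deriv η (x₀ + h) - deriv F (η (x₀ + h)))
          + (c*deriv η x₀ - deriv F (η x₀)))/h^2 := by
        rw [hadd x₀, heq' (x₀ + 2*h), heq' (x₀ + h), heq' x₀]
      have e3 : halfLap z x₀ = (-(deriv F (η (x₀ + 2*h)) - 2*deriv F (η (x₀ + h))
          + deriv F (η x₀)))/h^2 := by
        rw [e2]
        congr 1
        linear_combination c * hφ0
      rw [e3, le_div_iff₀ h2pos, zero_mul] at hlap
      linarith
    -- equation at a global min point
    have hGmin : ∀ x₀ : ℝ, (∀ x, z x₀ ≤ z x) →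
        0 ≤ deriv F (η (x₀ + 2*h)) - 2*deriv F (η (x₀ + h)) + deriv F (η x₀) := by
      intro x₀ hx₀
      have hmin : IsLocalMin z x₀ := Filter.Eventually.of_forall hx₀
      have hd0 : deriv z x₀ = 0 := hmin.deriv_eq_zero
      have hφ0 : deriv η (x₀ + 2*h) - 2*deriv η (x₀ + h) + deriv η x₀ = 0 := by
        have hzder := (hzd x₀).deriv
        rw [hd0] at hzder
        rcases div_eq_zero_iff.mp hzder.symm with h' | h'
        · exact h'
        · exact absurd h' (ne_of_gt h2pos)
      have hlap : halfLap z x₀ ≤ 0 := by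
        have hint : (0:ℝ) ≤ ∫ y in Ioi (0:ℝ), (z (x₀ + y) - 2*z x₀ + z (x₀ - y))/y^2 := by
          apply setIntegral_nonneg measurableSet_Ioi
          intro y _
          have h1 := hx₀ (x₀ + y)
          have h2 := hx₀ (x₀ - y)
          exact div_nonneg (by linarith) (by positivity)
        have hrfl : halfLap z x₀
            = -(1/Real.pi) * ∫ y in Ioi (0:ℝ), (z (x₀ + y) - 2*z x₀ + z (x₀ - y))/y^2 := rfl
        rw [hrfl]
        have hπ : 0 < (1/Real.pi) := by positivity
        exact mul_nonpos_of_nonpos_of_nonneg (by linarith) hint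
      have e2 : halfLap z x₀ = (c*(deriv η (x₀ + 2*h)) - deriv F (η (x₀ + 2*h))
          - 2*(c*deriv η (x₀ + h) - deriv F (η (x₀ + h)))
          + (c*deriv η x₀ - deriv F (η x₀)))/h^2 := by
        rw [hadd x₀, heq' (x₀ + 2*h), heq' (x₀ + h), heq' x₀]
      have e3 : halfLap z x₀ = (-(deriv F (η (x₀ + 2*h)) - 2*deriv F (η (x₀ + h))
          + deriv F (η x₀)))/h^2 := by
        rw [e2]
        congr 1
        linear_combination c * hφ0
      rw [e3, div_le_iff₀ h2pos, zero_mul] at hlap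
      linarith
    -- the good-region algebra, max version
    have algebra_max : ∀ x₀ : ℝ,
        (deriv F (η (x₀ + 2*h)) - 2*deriv F (η (x₀ + h)) + deriv F (η x₀) ≤ 0) →
        (R₁ < x₀ ∨ x₀ < R₂ - 2) → 0 ≤ z x₀ → z x₀ ≤ 2*L*K^2/lam := by
      intro x₀ hG hregion hzn
      obtain ⟨θ₁, hθ₁a, hθ₁b, hθ₁eq⟩ := hMVT (x₀ + h) (x₀ + 2*h) (by linarith)
      obtain ⟨θ₀, hθ₀a, hθ₀b, hθ₀eq⟩ := hMVT x₀ (x₀ + h) (by linarith)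
      have hθord : θ₀ < θ₁ := lt_trans hθ₀b hθ₁a
      have hrg2 := hrange (x₀ + 2*h)
      have hrg1 := hrange (x₀ + h)
      have hrg0 := hrange x₀
      have hθ₀mem : θ₀ ∈ Icc ηl ηr :=
        ⟨le_of_lt (lt_trans hrg0.1 hθ₀a), le_of_lt (lt_trans hθ₀b hrg1.2)⟩
      have hθ₁mem : θ₁ ∈ Icc ηl ηr :=
        ⟨le_of_lt (lt_trans hrg1.1 hθ₁a), le_of_lt (lt_trans hθ₁b hrg2.2)⟩
      have hgood : lam ≤ deriv (deriv F) θ₁ := by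
        rcases hregion with hr | hl
        · have hx01 : ηr - ρr < η (x₀ + h) := hR₁ (x₀ + h) (by linarith)
          have habs : |θ₁ - ηr| ≤ ρr := abs_le.mpr
            ⟨by linarith [hθ₁a], by linarith [hθ₁b, hrg2.2, hρr]⟩
          exact le_trans (min_le_right _ _) (hball_r θ₁ habs)
        · have hup : x₀ + 2*h ≤ R₂ := by linarith
          have hx02 : η (x₀ + 2*h) < ηl + ρl := hR₂ _ hup
          have habs : |θ₁ - ηl| ≤ ρl := abs_le.mpr
            ⟨by linarith [hrg1.1, hθ₁a, hρl], by linarith [hθ₁b]⟩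
          exact le_trans (min_le_left _ _) (hball_l θ₁ habs)
      have hΔ₀ : 0 ≤ η (x₀ + h) - η x₀ := hmono' _ _ (by linarith)
      have hΔ₀K : η (x₀ + h) - η x₀ ≤ K * h := by
        have hi := hincr x₀ (x₀ + h) (by linarith)
        rw [show x₀ + h - x₀ = h by ring] at hi
        exact hi
      have hθd : θ₁ - θ₀ ≤ K * (2*h) := by
        have h20 := hincr x₀ (x₀ + 2*h) (by linarith)
        rw [show x₀ + 2*h - x₀ = 2*h by ring] at h20
        linarith [hθ₁b, hθ₀a]
      have hθd0 : 0 ≤ θ₁ - θ₀ := by linarith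
      have hzval : h^2 * z x₀ = (η (x₀ + 2*h) - η (x₀ + h)) - (η (x₀ + h) - η x₀) := by
        simp only [hz]
        field_simp
        ring
      have hGc : deriv F (η (x₀+2*h)) - 2*deriv F (η (x₀+h)) + deriv F (η x₀)
          = deriv (deriv F) θ₁ * (η (x₀+2*h) - η (x₀+h))
            - deriv (deriv F) θ₀ * (η (x₀+h) - η x₀) := by
        linear_combination hθ₁eq - hθ₀eq
      have hLipθ : |deriv (deriv F) θ₀ - deriv (deriv F) θ₁| ≤ L * (θ₁ - θ₀) :=
        hLip θ₀ θ₁ hθ₀mem hθ₁mem hθord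
      have t1 : deriv (deriv F) θ₁ * (h^2 * z x₀)
          = (deriv F (η (x₀+2*h)) - 2*deriv F (η (x₀+h)) + deriv F (η x₀))
            + (deriv (deriv F) θ₀ - deriv (deriv F) θ₁) * (η (x₀ + h) - η x₀) := by
        rw [hzval]
        linear_combination -hGc
      have b1 : (deriv (deriv F) θ₀ - deriv (deriv F) θ₁) * (η (x₀ + h) - η x₀)
          ≤ (L * (θ₁ - θ₀)) * (η (x₀ + h) - η x₀) :=
        mul_le_mul_of_nonneg_right (le_trans (le_abs_self _) hLipθ) hΔ₀
      have m1 : (θ₁ - θ₀) * (η (x₀ + h) - η x₀) ≤ (K*(2*h)) * (K*h) :=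
        mul_le_mul hθd hΔ₀K hΔ₀ (by positivity)
      have b2 : (L * (θ₁ - θ₀)) * (η (x₀ + h) - η x₀) ≤ 2*L*K^2*h^2 := by
        calc (L * (θ₁ - θ₀)) * (η (x₀ + h) - η x₀)
            = L * ((θ₁ - θ₀) * (η (x₀ + h) - η x₀)) := by ring
          _ ≤ L * ((K*(2*h)) * (K*h)) := mul_le_mul_of_nonneg_left m1 hL0
          _ = 2*L*K^2*h^2 := by ring
      have b3 : lam * (h^2 * z x₀) ≤ deriv (deriv F) θ₁ * (h^2 * z x₀) :=
        mul_le_mul_of_nonneg_right hgood (mul_nonneg h2pos.le hzn)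
      have step : lam * (h^2 * z x₀) ≤ 2*L*K^2*h^2 := by
        calc lam * (h^2 * z x₀) ≤ deriv (deriv F) θ₁ * (h^2 * z x₀) := b3
          _ = (deriv F (η (x₀+2*h)) - 2*deriv F (η (x₀+h)) + deriv F (η x₀))
              + (deriv (deriv F) θ₀ - deriv (deriv F) θ₁) * (η (x₀ + h) - η x₀) := t1
          _ ≤ 2*L*K^2*h^2 := by linarith [b1, b2, hG]
      have step' : (lam * z x₀) * h^2 ≤ (2*L*K^2) * h^2 := by linarith [step]
      have s2 : lam * z x₀ ≤ 2*L*K^2 := (mul_le_mul_iff_of_pos_right h2pos).mp step'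
      rw [le_div_iff₀ hlam]
      linarith [s2]
    -- the good-region algebra, min version
    have algebra_min : ∀ x₀ : ℝ,
        (0 ≤ deriv F (η (x₀ + 2*h)) - 2*deriv F (η (x₀ + h)) + deriv F (η x₀)) →
        (R₁ < x₀ ∨ x₀ < R₂ - 2) → z x₀ ≤ 0 → -(2*L*K^2/lam) ≤ z x₀ := by
      intro x₀ hG hregion hzn
      obtain ⟨θ₁, hθ₁a, hθ₁b, hθ₁eq⟩ := hMVT (x₀ + h) (x₀ + 2*h) (by linarith)
      obtain ⟨θ₀, hθ₀a, hθ₀b, hθ₀eq⟩ := hMVT x₀ (x₀ + h) (by linarith)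
      have hθord : θ₀ < θ₁ := lt_trans hθ₀b hθ₁a
      have hrg2 := hrange (x₀ + 2*h)
      have hrg1 := hrange (x₀ + h)
      have hrg0 := hrange x₀
      have hθ₀mem : θ₀ ∈ Icc ηl ηr :=
        ⟨le_of_lt (lt_trans hrg0.1 hθ₀a), le_of_lt (lt_trans hθ₀b hrg1.2)⟩
      have hθ₁mem : θ₁ ∈ Icc ηl ηr :=
        ⟨le_of_lt (lt_trans hrg1.1 hθ₁a), le_of_lt (lt_trans hθ₁b hrg2.2)⟩
      have hgood : lam ≤ deriv (deriv F) θ₁ := by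
        rcases hregion with hr | hl
        · have hx01 : ηr - ρr < η (x₀ + h) := hR₁ (x₀ + h) (by linarith)
          have habs : |θ₁ - ηr| ≤ ρr := abs_le.mpr
            ⟨by linarith [hθ₁a], by linarith [hθ₁b, hrg2.2, hρr]⟩
          exact le_trans (min_le_right _ _) (hball_r θ₁ habs)
        · have hup : x₀ + 2*h ≤ R₂ := by linarith
          have hx02 : η (x₀ + 2*h) < ηl + ρl := hR₂ _ hup
          have habs : |θ₁ - ηl| ≤ ρl := abs_le.mpr
            ⟨by linarith [hrg1.1, hθ₁a, hρl], by linarith [hθ₁b]⟩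
          exact le_trans (min_le_left _ _) (hball_l θ₁ habs)
      have hΔ₀ : 0 ≤ η (x₀ + h) - η x₀ := hmono' _ _ (by linarith)
      have hΔ₀K : η (x₀ + h) - η x₀ ≤ K * h := by
        have hi := hincr x₀ (x₀ + h) (by linarith)
        rw [show x₀ + h - x₀ = h by ring] at hi
        exact hi
      have hθd : θ₁ - θ₀ ≤ K * (2*h) := by
        have h20 := hincr x₀ (x₀ + 2*h) (by linarith)
        rw [show x₀ + 2*h - x₀ = 2*h by ring] at h20
        linarith [hθ₁b, hθ₀a]
      have hθd0 : 0 ≤ θ₁ - θ₀ := by linarith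
      have hzval : h^2 * z x₀ = (η (x₀ + 2*h) - η (x₀ + h)) - (η (x₀ + h) - η x₀) := by
        simp only [hz]
        field_simp
        ring
      have hGc : deriv F (η (x₀+2*h)) - 2*deriv F (η (x₀+h)) + deriv F (η x₀)
          = deriv (deriv F) θ₁ * (η (x₀+2*h) - η (x₀+h))
            - deriv (deriv F) θ₀ * (η (x₀+h) - η x₀) := by
        linear_combination hθ₁eq - hθ₀eq
      have hLipθ : |deriv (deriv F) θ₀ - deriv (deriv F) θ₁| ≤ L * (θ₁ - θ₀) :=
        hLip θ₀ θ₁ hθ₀mem hθ₁mem hθord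
      have t1 : deriv (deriv F) θ₁ * (h^2 * z x₀)
          = (deriv F (η (x₀+2*h)) - 2*deriv F (η (x₀+h)) + deriv F (η x₀))
            + (deriv (deriv F) θ₀ - deriv (deriv F) θ₁) * (η (x₀ + h) - η x₀) := by
        rw [hzval]
        linear_combination -hGc
      have b1 : (-(L * (θ₁ - θ₀))) * (η (x₀ + h) - η x₀)
          ≤ (deriv (deriv F) θ₀ - deriv (deriv F) θ₁) * (η (x₀ + h) - η x₀) := by
        refine mul_le_mul_of_nonneg_right ?_ hΔ₀
        have := neg_abs_le (deriv (deriv F) θ₀ - deriv (deriv F) θ₁)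
        linarith [hLipθ]
      have m1 : (θ₁ - θ₀) * (η (x₀ + h) - η x₀) ≤ (K*(2*h)) * (K*h) :=
        mul_le_mul hθd hΔ₀K hΔ₀ (by positivity)
      have b2 : (L * (θ₁ - θ₀)) * (η (x₀ + h) - η x₀) ≤ 2*L*K^2*h^2 := by
        calc (L * (θ₁ - θ₀)) * (η (x₀ + h) - η x₀)
            = L * ((θ₁ - θ₀) * (η (x₀ + h) - η x₀)) := by ring
          _ ≤ L * ((K*(2*h)) * (K*h)) := mul_le_mul_of_nonneg_left m1 hL0
          _ = 2*L*K^2*h^2 := by ring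
      have b3 : deriv (deriv F) θ₁ * (h^2 * z x₀) ≤ lam * (h^2 * z x₀) :=
        mul_le_mul_of_nonpos_right hgood (mul_nonpos_of_nonneg_of_nonpos h2pos.le hzn)
      have step : -(2*L*K^2*h^2) ≤ lam * (h^2 * z x₀) := by
        linarith [b1, b2, hG, b3, t1]
      have step' : (-(2*L*K^2)) * h^2 ≤ (lam * z x₀) * h^2 := by linarith [step]
      have s2 : -(2*L*K^2) ≤ lam * z x₀ := (mul_le_mul_iff_of_pos_right h2pos).mp step'
      rw [← neg_div, div_le_iff₀ hlam]
      linarith [s2]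
    -- upper bound for z
    have upper : ∀ x, z x ≤ Mbar := by
      by_contra hcon
      push_neg at hcon
      obtain ⟨p, hp⟩ := hcon
      obtain ⟨x₀, hx₀⟩ := exists_max_of_tendsto_zero hzc hzar hzab
        (lt_of_le_of_lt hMbar0 hp)
      have hzx₀ : Mbar < z x₀ := lt_of_lt_of_le hp (hx₀ p)
      have hfin : z x₀ ≤ Mbar := by
        have hzn : 0 ≤ z x₀ := le_trans hMbar0 hzx₀.le
        rcases lt_or_ge R₁ x₀ with hcase2 | hcase1
        · exact le_trans (algebra_max x₀ (hGmax x₀ hx₀) (Or.inl hcase2) hzn)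
            (le_max_right _ _)
        rcases lt_or_ge x₀ (R₂ - 2) with hcase4 | hcase3
        · exact le_trans (algebra_max x₀ (hGmax x₀ hx₀) (Or.inr hcase4) hzn)
            (le_max_right _ _)
        · exact le_trans (le_trans (le_abs_self _) (hmiddle x₀ hcase3 hcase1))
            (le_max_left _ _)
      linarith
    -- lower bound for z
    have lower : ∀ x, -Mbar ≤ z x := by
      by_contra hcon
      push_neg at hcon
      obtain ⟨p, hp⟩ := hcon
      have hnegt : Tendsto (fun x => -z x) atTop (nhds 0) := by simpa using hzar.neg
      have hnegb : Tendsto (fun x => -z x) atBot (nhds 0) := by simpa using hzab.neg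
      obtain ⟨x₀, hx₀'⟩ := exists_max_of_tendsto_zero hzc.neg hnegt hnegb
        (p := p) (by show (0:ℝ) < -z p; linarith)
      have hx₀ : ∀ x, z x₀ ≤ z x := by
        intro x
        have h9 : -z x ≤ -z x₀ := hx₀' x
        linarith
      have hzx₀ : z x₀ < -Mbar := lt_of_le_of_lt (hx₀ p) hp
      have hzn : z x₀ ≤ 0 := by linarith [hMbar0]
      have hML : -Mbar ≤ -(2*L*K^2/lam) := neg_le_neg (le_max_right C₀ (2*L*K^2/lam))
      have hfin : -Mbar ≤ z x₀ := by
        rcases lt_or_ge R₁ x₀ with hcase2 | hcase1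
        · exact le_trans hML (algebra_min x₀ (hGmin x₀ hx₀) (Or.inl hcase2) hzn)
        rcases lt_or_ge x₀ (R₂ - 2) with hcase4 | hcase3
        · exact le_trans hML (algebra_min x₀ (hGmin x₀ hx₀) (Or.inr hcase4) hzn)
        · have := hmiddle x₀ hcase3 hcase1
          have h1 : -C₀ ≤ z x₀ := by
            have := abs_le.mp this
            linarith [this.1]
          have h2 : -Mbar ≤ -C₀ := neg_le_neg (le_max_left _ _)
          linarith
      linarith
    intro x
    rw [show (η (x + 2*h) - 2*η (x + h) + η x)/h^2 = z x from rfl, abs_le]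
    exact ⟨lower x, upper x⟩
  -- conclusion: pass to the limit h → 0
  refine ⟨Mbar, fun x => ?_⟩
  refine le_of_forall_pos_le_add (fun ε hε => ?_)
  obtain ⟨δ, hδ0, hδ⟩ := Metric.continuousAt_iff.mp (hc2.continuousAt (x := x)) ε hε
  set h : ℝ := min (δ/4) 1 with hhdef
  have hh0 : 0 < h := lt_min (by linarith) one_pos
  have hh1 : h ≤ 1 := min_le_right _ _
  have hhδ : h ≤ δ/4 := min_le_left _ _
  have h2pos : (0:ℝ) < h^2 := pow_pos hh0 2
  have hM' : ∀ t ∈ Icc x (x + 2*h), |deriv (deriv η) t - deriv (deriv η) x| ≤ ε := by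
    intro t ht
    have : dist t x < δ := by
      rw [Real.dist_eq, abs_of_nonneg (by linarith [ht.1])]
      linarith [ht.2]
    exact le_of_lt (hδ this)
  have happrox := aux_d2 η hd1 hd2 hc1 hc2 x h (deriv (deriv η) x) ε hh0.le hM'
  have hmain := main h hh0 hh1 x
  rw [abs_div, abs_of_pos h2pos, div_le_iff₀ h2pos] at hmain
  have t0 : deriv (deriv η) x * h^2 = (η (x + 2*h) - 2*η (x + h) + η x)
      + (deriv (deriv η) x * h^2 - (η (x + 2*h) - 2*η (x + h) + η x)) := by ring
  have t1 : |deriv (deriv η) x * h^2| ≤ Mbar * h^2 + ε * h^2 := by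
    calc |deriv (deriv η) x * h^2|
        = |(η (x + 2*h) - 2*η (x + h) + η x)
          + (deriv (deriv η) x * h^2 - (η (x + 2*h) - 2*η (x + h) + η x))| := by rw [← t0]
      _ ≤ |η (x + 2*h) - 2*η (x + h) + η x|
          + |deriv (deriv η) x * h^2 - (η (x + 2*h) - 2*η (x + h) + η x)| := abs_add_le _ _
      _ ≤ Mbar * h^2 + ε * h^2 := by
          refine add_le_add hmain ?_
          rw [abs_sub_comm]
          exact happrox
  rw [abs_mul, abs_of_pos h2pos] at t1
  have t2 : |deriv (deriv η) x| * h^2 ≤ (Mbar + ε) * h^2 := by linarith [t1]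
  exact (mul_le_mul_iff_of_pos_right h2pos).mp t2
end

section
/- Let η_l < η_r and let η : ℝ → ℝ be of class C² with η'' bounded on ℝ, lim_{x→−∞} η(x) = η_l, lim_{x→+∞} η(x) = η_r, and such that there exist constants B > A > 0 with A|x|^{−2} ≤ η'(x) ≤ B|x|^{−2} for all |x| ≥ 1. Then lim_{x→+∞} x·|∂x|η(x) = (η_r − η_l)/π. -/
open MeasureTheory Filter Set

lemma cube_root_le {u v : ℝ} (hu : 0 ≤ u) (hv : 0 ≤ v) (h : u^3 ≤ v) :
    u ≤ v ^ ((1:ℝ)/3) := by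
  have h1 : u = (u^3 : ℝ) ^ ((1:ℝ)/3) := by
    rw [← Real.rpow_natCast u 3, ← Real.rpow_mul hu]
    norm_num
  rw [h1]
  exact Real.rpow_le_rpow (by positivity) h (by norm_num)

lemma aux_diff {η : ℝ → ℝ} (hη : ContDiff ℝ 2 η) :
    Differentiable ℝ η ∧ Differentiable ℝ (deriv η) ∧ Continuous (deriv (deriv η)) := by
  have h2 : (2 : WithTop ℕ∞) = 1 + 1 := by norm_num
  rw [h2, contDiff_succ_iff_deriv] at hη
  obtain ⟨h1, -, h3⟩ := hη
  rw [contDiff_one_iff_deriv] at h3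
  exact ⟨h1, h3.1, h3.2⟩

lemma aux_lip {η : ℝ → ℝ} (hη : ContDiff ℝ 2 η) {M : ℝ} (hM : ∀ x, |deriv (deriv η) x| ≤ M)
    (a b : ℝ) : |deriv η b - deriv η a| ≤ M * |b - a| := by
  have := Convex.norm_image_sub_le_of_norm_deriv_le (f := deriv η) (s := (univ : Set ℝ))
    (fun t _ => ((aux_diff hη).2.1 t)) (fun t _ => by simpa [Real.norm_eq_abs] using hM t)
    convex_univ (mem_univ a) (mem_univ b)
  simpa [Real.norm_eq_abs] using this

lemma aux_taylor {η : ℝ → ℝ} (hη : ContDiff ℝ 2 η) {M : ℝ}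
    (hM : ∀ x, |deriv (deriv η) x| ≤ M) (x y : ℝ) (hy : 0 ≤ y) :
    |η (x + y) - 2 * η x + η (x - y)| ≤ 2 * M * y ^ 2 := by
  have hd : Differentiable ℝ η := (aux_diff hη).1
  set φ : ℝ → ℝ := fun t => η (x + t) + η (x - t) with hφ
  have hdφ : ∀ t : ℝ, HasDerivAt φ (deriv η (x + t) - deriv η (x - t)) t := by
    intro t
    have h1 : HasDerivAt (fun t : ℝ => η (x + t)) (deriv η (x + t)) t := by
      simpa [Function.comp_def] using (hd (x + t)).hasDerivAt.comp t ((hasDerivAt_id t).const_add x)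
    have h2 : HasDerivAt (fun t : ℝ => η (x - t)) (-deriv η (x - t)) t := by
      simpa [Function.comp_def] using (hd (x - t)).hasDerivAt.comp t ((hasDerivAt_id t).const_sub x)
    have := h1.add h2; rw [← sub_eq_add_neg] at this; exact this
  have hM0 : 0 ≤ M := le_trans (abs_nonneg _) (hM 0)
  have key := Convex.norm_image_sub_le_of_norm_deriv_le (f := φ) (s := Icc 0 y)
    (fun t _ => (hdφ t).differentiableAt)
    (fun t ht => by
      rw [(hdφ t).deriv, Real.norm_eq_abs]
      have := aux_lip hη hM (x - t) (x + t)
      have ht2 : |x + t - (x - t)| = 2 * t := by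
        rw [abs_of_nonneg] <;> [skip; linarith [ht.1]]
        ring
      rw [ht2] at this
      calc |deriv η (x + t) - deriv η (x - t)| ≤ M * (2 * t) := this
        _ ≤ 2 * M * y := by nlinarith [ht.1, ht.2]
    )
    (convex_Icc 0 y) ⟨le_refl 0, hy⟩ ⟨hy, le_refl y⟩
  have hφ0 : φ 0 = 2 * η x := by simp [hφ]; ring
  have hφy : φ y = η (x + y) + η (x - y) := rfl
  rw [Real.norm_eq_abs, Real.norm_eq_abs, hφ0, hφy, sub_zero] at key
  calc |η (x + y) - 2 * η x + η (x - y)|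
      = |η (x + y) + η (x - y) - 2 * η x| := by ring_nf
    _ ≤ 2 * M * y * |y| := key
    _ = 2 * M * y ^ 2 := by rw [abs_of_nonneg hy]; ring

lemma aux_incr {η : ℝ → ℝ} (hη : ContDiff ℝ 2 η) {B : ℝ} (hB : 0 < B)
    (hup : ∀ t : ℝ, 1 ≤ |t| → deriv η t ≤ B / |t| ^ 2)
    (hlo : ∀ t : ℝ, 1 ≤ |t| → 0 ≤ deriv η t)
    {a b : ℝ} (ha : 1 ≤ a) (hab : a ≤ b) :
    0 ≤ η b - η a ∧ η b - η a ≤ B * (a⁻¹ - b⁻¹) := by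
  have hd := aux_diff hη
  have ha0 : 0 < a := lt_of_lt_of_le one_pos ha
  have habs : ∀ t ∈ Icc a b, |t| = t := fun t ht => abs_of_pos (lt_of_lt_of_le ha0 ht.1)
  have hFTC : ∫ t in a..b, deriv η t = η b - η a :=
    intervalIntegral.integral_deriv_eq_sub (fun t _ => hd.1 t)
      (hd.2.1.continuous.continuousOn.intervalIntegrable)
  constructor
  · rw [← hFTC]
    apply intervalIntegral.integral_nonneg hab
    intro t ht
    exact hlo t (by rw [habs t ht]; linarith [ht.1])
  · rw [← hFTC]
    have hint1 : IntervalIntegrable (deriv η) volume a b :=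
      hd.2.1.continuous.continuousOn.intervalIntegrable
    have hint2 : IntervalIntegrable (fun t : ℝ => B * t ^ (-2 : ℤ)) volume a b := by
      apply ContinuousOn.intervalIntegrable
      apply ContinuousOn.mul continuousOn_const
      apply ContinuousOn.zpow₀ continuousOn_id
      intro t ht
      left
      rw [uIcc_of_le hab] at ht
      exact ne_of_gt (lt_of_lt_of_le ha0 ht.1)
    have hmono : ∫ t in a..b, deriv η t ≤ ∫ t in a..b, B * t ^ (-2 : ℤ) := by
      apply intervalIntegral.integral_mono_on hab hint1 hint2
      intro t ht
      have h1 : (1:ℝ) ≤ |t| := by rw [habs t ht]; linarith [ht.1]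
      calc deriv η t ≤ B / |t| ^ 2 := hup t h1
        _ = B * t ^ (-2 : ℤ) := by
            rw [habs t ht, zpow_neg, div_eq_mul_inv]
            norm_num
    refine le_trans hmono ?_
    rw [intervalIntegral.integral_const_mul, integral_zpow]
    · have hb0 : (0:ℝ) < b := lt_of_lt_of_le ha0 hab
      rw [show ((-2:ℤ) + 1) = (-1 : ℤ) by norm_num]
      rw [zpow_neg_one, zpow_neg_one]
      apply le_of_eq
      push_cast
      field_simp
      ring
    · right
      constructor
      · decide
      · rw [uIcc_of_le hab]
        intro h0
        exact absurd h0.1 (by linarith)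

lemma aux_bdd {η : ℝ → ℝ} {ηl ηr : ℝ} (hc : Continuous η)
    (hbot : Tendsto η atBot (nhds ηl)) (htop : Tendsto η atTop (nhds ηr)) :
    ∃ C : ℝ, 0 ≤ C ∧ ∀ x, |η x| ≤ C := by
  have h1 : ∀ᶠ x in atTop, |η x - ηr| < 1 := htop.eventually (eventually_abs_sub_lt ηr one_pos)
  have h2 : ∀ᶠ x in atBot, |η x - ηl| < 1 := hbot.eventually (eventually_abs_sub_lt ηl one_pos)
  obtain ⟨b0, hb0⟩ := eventually_atTop.1 h1
  obtain ⟨a0, ha0⟩ := eventually_atBot.1 h2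
  set a1 : ℝ := min a0 0
  set b1 : ℝ := max b0 0
  obtain ⟨C0, hC0⟩ := (isCompact_Icc (a := a1) (b := b1)).exists_bound_of_continuousOn
    hc.continuousOn
  refine ⟨max C0 (max (|ηr| + 1) (|ηl| + 1)), ?_, ?_⟩
  · refine le_trans ?_ (le_max_right _ _)
    refine le_trans ?_ (le_max_left _ _)
    positivity
  · intro x
    rcases le_total x a1 with hx | hx
    · have := ha0 x (le_trans hx (min_le_left _ _))
      have : |η x| ≤ |ηl| + 1 := by
        have := abs_sub_abs_le_abs_sub (η x) ηl
        linarith [abs_sub_abs_le_abs_sub (η x) ηl]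
      exact le_trans this (le_trans (le_max_right _ _) (le_max_right _ _))
    rcases le_total b1 x with hx' | hx'
    · have := hb0 x (le_trans (le_max_left _ _) hx')
      have : |η x| ≤ |ηr| + 1 := by
        linarith [abs_sub_abs_le_abs_sub (η x) ηr]
      exact le_trans this (le_trans (le_max_left _ _) (le_max_right _ _))
    · have := hC0 x ⟨hx, hx'⟩
      rw [Real.norm_eq_abs] at this
      exact le_trans this (le_max_left _ _)

noncomputable def gbound (K : ℝ) (s : ℝ) : ℝ := if s ≤ 1 then K * s ^ (-(2:ℝ)/3) else K / s ^ 2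

lemma key_bound {η : ℝ → ℝ} (hη : ContDiff ℝ 2 η) {M B C : ℝ}
    (hM : ∀ t, |deriv (deriv η) t| ≤ M) (hB : 0 < B)
    (hup : ∀ t : ℝ, 1 ≤ |t| → deriv η t ≤ B / |t| ^ 2)
    (hlo : ∀ t : ℝ, 1 ≤ |t| → 0 ≤ deriv η t)
    (hC : ∀ t, |η t| ≤ C)
    {x s : ℝ} (hx : 2 ≤ x) (hs : 0 < s) :
    |(η (x + x * s) - 2 * η x + η (x - x * s)) / s ^ 2|
      ≤ gbound (2 * M + 3 * B + 16 * C + 1) s := by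
  have hx0 : 0 < x := by linarith
  have hM0 : 0 ≤ M := le_trans (abs_nonneg _) (hM 0)
  have hC0 : 0 ≤ C := le_trans (abs_nonneg _) (hC 0)
  set K := 2 * M + 3 * B + 16 * C + 1 with hK
  have hK0 : 0 < K := by rw [hK]; linarith
  have habsdiv : |(η (x + x * s) - 2 * η x + η (x - x * s)) / s ^ 2|
      = |η (x + x * s) - 2 * η x + η (x - x * s)| / s ^ 2 := by
    rw [abs_div, abs_of_pos (by positivity : (0:ℝ) < s ^ 2)]
  set D := η (x + x * s) - 2 * η x + η (x - x * s) with hDdef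
  have hD4 : |D| ≤ 4 * C := by
    have hrw : D = η (x + x * s) + -(2 * η x) + η (x - x * s) := by rw [hDdef]; ring
    rw [hrw]
    have h3 := abs_add_three (η (x + x * s)) (-(2 * η x)) (η (x - x * s))
    have h4 : |(-(2 * η x))| = 2 * |η x| := by rw [abs_neg, abs_mul]; norm_num
    have := hC (x + x * s); have := hC x; have := hC (x - x * s)
    rw [h4] at h3
    linarith
  by_cases h1 : s ≤ 1
  · have hDb : |D| ≤ K * s ^ ((4:ℝ)/3) := by
      by_cases h2 : s ≤ 1/2
      · by_cases h3 : x ^ 3 * s ≤ 1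
        · -- Taylor regime
          have ht := aux_taylor hη hM x (x * s) (by positivity)
          have hx3 : x ^ 3 ≤ s⁻¹ := by
            rw [← one_div]; exact (le_div_iff₀ hs).2 h3
          have hxle : x ≤ (s⁻¹) ^ ((1:ℝ)/3) := cube_root_le hx0.le (by positivity) hx3
          have hx2 : x ^ 2 ≤ s ^ (-(2:ℝ)/3) := by
            have hp := pow_le_pow_left₀ hx0.le hxle 2
            have he : ((s⁻¹) ^ ((1:ℝ)/3)) ^ 2 = s ^ (-(2:ℝ)/3) := by
              rw [← Real.rpow_natCast ((s⁻¹) ^ ((1:ℝ)/3)) 2, ← Real.rpow_mul (by positivity),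
                Real.inv_rpow hs.le, ← Real.rpow_neg hs.le]
              norm_num
            rw [he] at hp; exact hp
          have hrw2 : s ^ (-(2:ℝ)/3) * s ^ 2 = s ^ ((4:ℝ)/3) := by
            rw [← Real.rpow_natCast s 2, ← Real.rpow_add hs]; norm_num
          calc |D| ≤ 2 * M * (x * s) ^ 2 := ht
            _ = 2 * M * (x ^ 2 * s ^ 2) := by ring
            _ ≤ 2 * M * (s ^ (-(2:ℝ)/3) * s ^ 2) := by
                apply mul_le_mul_of_nonneg_left ?_ (by linarith : (0:ℝ) ≤ 2 * M)
                exact mul_le_mul_of_nonneg_right hx2 (by positivity)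
            _ = 2 * M * s ^ ((4:ℝ)/3) := by rw [hrw2]
            _ ≤ K * s ^ ((4:ℝ)/3) := by
                apply mul_le_mul_of_nonneg_right ?_ (Real.rpow_nonneg hs.le _)
                rw [hK]; linarith
        · -- decay regime
          have hpos1 : (0:ℝ) < x + x * s := by positivity
          have hpos2 : (0:ℝ) < x - x * s := by nlinarith
          have h1x : (1:ℝ) ≤ x - x * s := by nlinarith
          have hd1 := aux_incr hη hB hup hlo (by linarith : (1:ℝ) ≤ x)
            (by nlinarith : x ≤ x + x * s)
          have hd2 := aux_incr hη hB hup hlo h1x (by nlinarith : x - x * s ≤ x)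
          have e1 : x⁻¹ - (x + x * s)⁻¹ ≤ 2 * (s / x) := by
            rw [inv_sub_inv (ne_of_gt hx0) (ne_of_gt hpos1)]
            rw [div_le_iff₀ (by positivity)]
            have : 2 * (s / x) * (x * (x + x * s)) = 2 * s * (x + x * s) := by
              field_simp
            rw [this]; nlinarith
          have e2 : (x - x * s)⁻¹ - x⁻¹ ≤ 2 * (s / x) := by
            rw [inv_sub_inv (ne_of_gt hpos2) (ne_of_gt hx0)]
            rw [div_le_iff₀ (by positivity)]
            have : 2 * (s / x) * ((x - x * s) * x) = 2 * s * (x - x * s) := by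
              field_simp
            rw [this]
            nlinarith [mul_nonneg (mul_nonneg hs.le hx0.le) (by linarith : (0:ℝ) ≤ 1 - 2*s)]
          have hBe1 : η (x + x * s) - η x ≤ 2 * (B * (s / x)) := by
            have := mul_le_mul_of_nonneg_left e1 hB.le
            calc η (x + x * s) - η x ≤ B * (x⁻¹ - (x + x * s)⁻¹) := hd1.2
              _ ≤ B * (2 * (s / x)) := this
              _ = 2 * (B * (s / x)) := by ring
          have hBe2 : η x - η (x - x * s) ≤ 2 * (B * (s / x)) := by
            have := mul_le_mul_of_nonneg_left e2 hB.le
            calc η x - η (x - x * s) ≤ B * ((x - x * s)⁻¹ - x⁻¹) := hd2.2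
              _ ≤ B * (2 * (s / x)) := this
              _ = 2 * (B * (s / x)) := by ring
          have hBsx : (0:ℝ) ≤ B * (s / x) := by positivity
          have hDle : |D| ≤ 3 * (B * (s / x)) := by
            rw [hDdef, abs_le]
            constructor
            · have := hd1.1; linarith
            · have := hd2.1; linarith
          have hxinv : x⁻¹ ≤ s ^ ((1:ℝ)/3) := by
            apply cube_root_le (by positivity) hs.le
            have hsx3 : s⁻¹ ≤ x ^ 3 := by
              rw [← one_div]
              exact (div_le_iff₀ hs).2 (le_of_lt (not_le.1 h3))
            calc (x⁻¹) ^ 3 = (x ^ 3)⁻¹ := by rw [← inv_pow]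
              _ ≤ s := by
                  rw [inv_le_comm₀ (by positivity) hs]
                  exact hsx3
          have hfin : s * x⁻¹ ≤ s ^ ((4:ℝ)/3) := by
            calc s * x⁻¹ ≤ s * s ^ ((1:ℝ)/3) := by
                  exact mul_le_mul_of_nonneg_left hxinv hs.le
              _ = s ^ ((4:ℝ)/3) := by
                  rw [show (4:ℝ)/3 = 1 + 1/3 by norm_num, Real.rpow_add hs, Real.rpow_one]
          calc |D| ≤ 3 * (B * (s / x)) := hDle
            _ = 3 * B * (s * x⁻¹) := by ring
            _ ≤ 3 * B * s ^ ((4:ℝ)/3) := by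
                exact mul_le_mul_of_nonneg_left hfin (by positivity)
            _ ≤ K * s ^ ((4:ℝ)/3) := by
                apply mul_le_mul_of_nonneg_right ?_ (Real.rpow_nonneg hs.le _)
                rw [hK]; linarith
      · -- 1/2 < s ≤ 1
        have hs4 : (1:ℝ)/4 ≤ s ^ ((4:ℝ)/3) := by
          have ha : ((1:ℝ)/2) ^ ((4:ℝ)/3) ≤ s ^ ((4:ℝ)/3) :=
            Real.rpow_le_rpow (by norm_num) (le_of_lt (not_le.1 h2)) (by norm_num)
          have hb : ((1:ℝ)/2) ^ (((2:ℕ)):ℝ) ≤ ((1:ℝ)/2) ^ ((4:ℝ)/3) :=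
            Real.rpow_le_rpow_of_exponent_ge (by norm_num) (by norm_num) (by norm_num)
          rw [Real.rpow_natCast] at hb
          norm_num at hb
          linarith
        have h16 : 4 * C ≤ 16 * C * s ^ ((4:ℝ)/3) := by
          nlinarith [mul_le_mul_of_nonneg_left hs4 (by linarith : (0:ℝ) ≤ 16 * C)]
        calc |D| ≤ 4 * C := hD4
          _ ≤ 16 * C * s ^ ((4:ℝ)/3) := h16
          _ ≤ K * s ^ ((4:ℝ)/3) := by
              apply mul_le_mul_of_nonneg_right ?_ (Real.rpow_nonneg hs.le _)
              rw [hK]; linarith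
    rw [habsdiv]
    unfold gbound
    rw [if_pos h1]
    have hre : K * s ^ (-(2:ℝ)/3) = K * s ^ ((4:ℝ)/3) / s ^ 2 := by
      rw [mul_div_assoc]
      congr 1
      rw [← Real.rpow_natCast s 2, ← Real.rpow_sub hs]
      norm_num
    rw [hre]
    gcongr
  · rw [habsdiv]
    unfold gbound
    rw [if_neg h1]
    gcongr
    rw [hK]; linarith

lemma gbound_integrable {K : ℝ} : IntegrableOn (gbound K) (Ioi (0:ℝ)) := by
  have h01 : IntegrableOn (gbound K) (Ioc (0:ℝ) 1) := by
    apply IntegrableOn.congr_fun (f := fun s : ℝ => K * s ^ (-(2:ℝ)/3)) ?_ ?_ measurableSet_Ioc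
    · exact ((intervalIntegral.intervalIntegrable_rpow' (by norm_num : (-1:ℝ) < -(2:ℝ)/3)).const_mul K).1
    · intro s hs
      unfold gbound
      rw [if_pos hs.2]
  have h1i : IntegrableOn (gbound K) (Ioi (1:ℝ)) := by
    apply IntegrableOn.congr_fun (f := fun s : ℝ => K * s ^ (-2:ℝ)) ?_ ?_ measurableSet_Ioi
    · exact (integrableOn_Ioi_rpow_of_lt (by norm_num) one_pos).const_mul K
    · intro s hs
      have hs0 : (0:ℝ) < s := lt_trans one_pos (mem_Ioi.1 hs)
      show K * s ^ (-2:ℝ) = gbound K s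
      unfold gbound
      rw [if_neg (not_le.2 (mem_Ioi.1 hs))]
      rw [Real.rpow_neg hs0.le, div_eq_mul_inv]
      congr 1
      rw [← Real.rpow_natCast s 2]
      norm_num
  have := h01.union h1i
  rwa [Ioc_union_Ioi_eq_Ioi zero_le_one] at this

theorem halfLap_asymptote_aux
    (ηl ηr : ℝ) (hlr : ηl < ηr)
    (η : ℝ → ℝ) (hη : ContDiff ℝ 2 η)
    (hη'' : ∃ M : ℝ, ∀ x, |deriv (deriv η) x| ≤ M)
    (hbot : Tendsto η atBot (nhds ηl)) (htop : Tendsto η atTop (nhds ηr))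
    (hdecay : ∃ A B : ℝ, 0 < A ∧ A < B ∧ ∀ x : ℝ, 1 ≤ |x| →
      A / |x| ^ 2 ≤ deriv η x ∧ deriv η x ≤ B / |x| ^ 2) :
    Tendsto (fun x => x * (-(1 / Real.pi) *
        ∫ y in Set.Ioi (0:ℝ), (η (x + y) - 2 * η x + η (x - y)) / y ^ 2))
      atTop (nhds ((ηr - ηl) / Real.pi)) := by
  obtain ⟨M, hM⟩ := hη''
  obtain ⟨A, B, hA, hAB, hdec⟩ := hdecay
  have hB : 0 < B := lt_trans hA hAB
  have hup : ∀ t : ℝ, 1 ≤ |t| → deriv η t ≤ B / |t| ^ 2 := fun t ht => (hdec t ht).2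
  have hlo : ∀ t : ℝ, 1 ≤ |t| → 0 ≤ deriv η t := by
    intro t ht
    have h1 := (hdec t ht).1
    have h2 : (0:ℝ) < A / |t| ^ 2 := by
      have : (0:ℝ) < |t| := lt_of_lt_of_le one_pos ht
      positivity
    linarith
  obtain ⟨C, hC0, hC⟩ := aux_bdd hη.continuous hbot htop
  set K := 2 * M + 3 * B + 16 * C + 1 with hK
  set F : ℝ → ℝ → ℝ := fun x s => (η (x + x * s) - 2 * η x + η (x - x * s)) / s ^ 2 with hF
  set f : ℝ → ℝ := fun s => Set.indicator (Ioi 1) (fun s => (ηl - ηr) / s ^ 2) s with hf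
  have hηc : Continuous η := hη.continuous
  have hF_meas : ∀ᶠ x in atTop, AEStronglyMeasurable (F x) (volume.restrict (Ioi (0:ℝ))) := by
    apply Eventually.of_forall
    intro x
    apply ContinuousOn.aestronglyMeasurable ?_ measurableSet_Ioi
    simp only [hF]
    apply ContinuousOn.div
    · apply Continuous.continuousOn; fun_prop
    · apply Continuous.continuousOn; fun_prop
    · intro s hs; exact pow_ne_zero 2 (ne_of_gt (mem_Ioi.1 hs))
  have h_bound : ∀ᶠ x in atTop, ∀ᵐ s ∂(volume.restrict (Ioi (0:ℝ))), ‖F x s‖ ≤ gbound K s := by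
    filter_upwards [eventually_ge_atTop (2:ℝ)] with x hx
    filter_upwards [ae_restrict_mem measurableSet_Ioi] with s hs
    rw [Real.norm_eq_abs]
    exact key_bound hη hM hB hup hlo hC hx (mem_Ioi.1 hs)
  have h_int : Integrable (gbound K) (volume.restrict (Ioi (0:ℝ))) := gbound_integrable
  have h_lim : ∀ᵐ s ∂(volume.restrict (Ioi (0:ℝ))),
      Tendsto (fun x => F x s) atTop (nhds (f s)) := by
    have hone : ∀ᵐ s : ℝ ∂(volume.restrict (Ioi (0:ℝ))), s ≠ (1:ℝ) := by
      apply ae_restrict_of_ae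
      rw [ae_iff]
      simp only [ne_eq, not_not, setOf_eq_eq_singleton]
      exact measure_singleton 1
    filter_upwards [hone, ae_restrict_mem measurableSet_Ioi] with s hs1 hs0
    have hs : 0 < s := mem_Ioi.1 hs0
    have T1 : Tendsto (fun x : ℝ => η (x + x * s)) atTop (nhds ηr) := by
      apply htop.comp
      have h := (tendsto_id (α := ℝ)).atTop_mul_const (by linarith : (0:ℝ) < 1 + s)
      apply h.congr
      intro x; simp only [id]; ring
    rcases lt_or_gt_of_ne hs1 with hlt | hgt
    · have T3 : Tendsto (fun x : ℝ => η (x - x * s)) atTop (nhds ηr) := by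
        apply htop.comp
        have h := (tendsto_id (α := ℝ)).atTop_mul_const (by linarith : (0:ℝ) < 1 - s)
        apply h.congr
        intro x; simp only [id]; ring
      have hfs : f s = 0 := by
        rw [hf]
        exact indicator_of_notMem (by simp only [mem_Ioi, not_lt]; linarith) _
      have h := ((T1.sub (htop.const_mul 2)).add T3).div_const (s ^ 2)
      have heq0 : (ηr - 2 * ηr + ηr) / s ^ 2 = 0 := by
        rw [show ηr - 2 * ηr + ηr = (0:ℝ) by ring, zero_div]
      rw [hfs, ← heq0]
      exact h
    · have T3 : Tendsto (fun x : ℝ => η (x - x * s)) atTop (nhds ηl) := by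
        apply hbot.comp
        have h := (tendsto_id (α := ℝ)).atTop_mul_const_of_neg (by linarith : 1 - s < 0)
        apply h.congr
        intro x; simp only [id]; ring
      have hfs : f s = (ηl - ηr) / s ^ 2 := by
        rw [hf]
        exact indicator_of_mem (mem_Ioi.2 hgt) _
      have h := ((T1.sub (htop.const_mul 2)).add T3).div_const (s ^ 2)
      rw [hfs, show (ηl - ηr) / s ^ 2 = (ηr - 2 * ηr + ηl) / s ^ 2 by ring]
      exact h
  have hmain : Tendsto (fun x => ∫ s in Ioi (0:ℝ), F x s) atTop
      (nhds (∫ s in Ioi (0:ℝ), f s)) :=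
    tendsto_integral_filter_of_dominated_convergence (gbound K) hF_meas h_bound h_int h_lim
  have hfint : ∫ s in Ioi (0:ℝ), f s = ηl - ηr := by
    rw [hf]
    rw [setIntegral_indicator measurableSet_Ioi]
    rw [show Ioi (0:ℝ) ∩ Ioi (1:ℝ) = Ioi 1 from
      inter_eq_right.mpr (Ioi_subset_Ioi zero_le_one)]
    have hcong : EqOn (fun s : ℝ => (ηl - ηr) / s ^ 2)
        (fun s : ℝ => (ηl - ηr) * s ^ (-2:ℝ)) (Ioi 1) := by
      intro s hs
      have hs0 : (0:ℝ) < s := lt_trans one_pos (mem_Ioi.1 hs)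
      simp only
      rw [Real.rpow_neg hs0.le, div_eq_mul_inv]
      congr 1
      rw [← Real.rpow_natCast s 2]
      norm_num
    rw [setIntegral_congr_fun measurableSet_Ioi hcong]
    rw [MeasureTheory.integral_const_mul]
    rw [integral_Ioi_rpow_of_lt (by norm_num : (-2:ℝ) < -1) one_pos]
    rw [show (-2:ℝ) + 1 = -1 by norm_num]
    rw [Real.rpow_neg_one]
    norm_num
  rw [hfint] at hmain
  have heq : ∀ᶠ x in atTop, -(1 / Real.pi) * ∫ s in Ioi (0:ℝ), F x s
      = x * (-(1 / Real.pi) * ∫ y in Set.Ioi (0:ℝ), (η (x + y) - 2 * η x + η (x - y)) / y ^ 2) := by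
    filter_upwards [eventually_gt_atTop (0:ℝ)] with x hx
    have hxne : x ≠ 0 := ne_of_gt hx
    have hsub : (∫ s in Ioi (0:ℝ), (η (x + x * s) - 2 * η x + η (x - x * s)) / (x * s) ^ 2)
        = x⁻¹ • ∫ y in Ioi (0:ℝ), (η (x + y) - 2 * η x + η (x - y)) / y ^ 2 := by
      have h := integral_comp_mul_left_Ioi
        (fun y => (η (x + y) - 2 * η x + η (x - y)) / y ^ 2) 0 hx
      rw [mul_zero] at h
      simpa using h
    have hIeq : (∫ s in Ioi (0:ℝ), F x s)
        = x ^ 2 * ∫ s in Ioi (0:ℝ), (η (x + x * s) - 2 * η x + η (x - x * s)) / (x * s) ^ 2 := by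
      rw [← MeasureTheory.integral_const_mul]
      apply setIntegral_congr_fun measurableSet_Ioi
      intro s hs
      have hs0 : s ≠ 0 := ne_of_gt (mem_Ioi.1 hs)
      simp only [hF]
      field_simp
    rw [hIeq, hsub, smul_eq_mul]
    field_simp
  have final := hmain.const_mul (-(1 / Real.pi))
  have hval : -(1 / Real.pi) * (ηl - ηr) = (ηr - ηl) / Real.pi := by
    field_simp
    ring
  rw [hval] at final
  exact Tendsto.congr' heq final

/-- `x · |∂x|η(x) → (η_r − η_l)/π` as `x → +∞`. -/
theorem halfLap_asymptote
    (ηl ηr : ℝ) (hlr : ηl < ηr)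
    (η : ℝ → ℝ) (hη : ContDiff ℝ 2 η)
    (hη'' : ∃ M : ℝ, ∀ x, |deriv (deriv η) x| ≤ M)
    (hbot : Tendsto η atBot (nhds ηl)) (htop : Tendsto η atTop (nhds ηr))
    (hdecay : ∃ A B : ℝ, 0 < A ∧ A < B ∧ ∀ x : ℝ, 1 ≤ |x| →
      A / |x| ^ 2 ≤ deriv η x ∧ deriv η x ≤ B / |x| ^ 2) :
    Tendsto (fun x => x * halfLap η x) atTop (nhds ((ηr - ηl) / Real.pi)) := by
  simpa [halfLap] using
    halfLap_asymptote_aux ηl ηr hlr η hη hη'' hbot htop hdecay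
end
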